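/- arXiv:1602.01860 — 2 statements merged into one kernel-verified Lean document; each statement's English description precedes it below -/
import Mathlib

section
/- Suppose the ESP data satisfies Assumption (B) and fix δ > 0 and a set B as in Assumption (B). Then there exists δ' ∈ [0,1) such that for every x ∈ ∂G ∖ W*, every K ∈ ℕ, and every finite sequence x₁,…,x_K ∈ ∂G ∖ W* with I(x) = ⋃_{k=1}^K I(x_k), one has ‖L_{x₁}* ⋯ L_{x_K}* y‖_{B*} ≤ δ'‖y‖_{B*} for all y ∈ H_x^⊥. Consequently, if x ∈ ∂G ∖ W* and (x_k)_{k∈ℕ} is a sequence in ∂G ∖ W* with I(x) = ⋃_{k≥ℓ} I(x_k) for every ℓ ∈ ℕ, then for every y ∈ H_x^⊥, L_{x₁}* ⋯ L_{x_K}* y → 0 as K → ∞. -/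
open scoped RealInnerProductSpace ENNReal NNReal
open Filter Topology Set MeasureTheory

noncomputable section

abbrev EucSp (J : ℕ) : Type := EuclideanSpace ℝ (Fin J)

/-- The convex cone generated by a set of vectors (by convention `coneGen ∅ = {0}`). -/
def coneGen {J : ℕ} (s : Set (EucSp J)) : Set (EucSp J) :=
  { y | ∃ (k : ℕ) (r : Fin k → ℝ) (v : Fin k → EucSp J),
      (∀ i, 0 ≤ r i) ∧ (∀ i, v i ∈ s) ∧ y = ∑ i, r i • v i }

/-- The polyhedral domain `G`. -/
def Gset {J N : ℕ} (n : Fin N → EucSp J) (c : Fin N → ℝ) : Set (EucSp J) :=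
  { x | ∀ i, c i ≤ ⟪x, n i⟫ }

/-- The active index set `I(x)`. -/
def ISet {J N : ℕ} (n : Fin N → EucSp J) (c : Fin N → ℝ) (x : EucSp J) : Set (Fin N) :=
  { i | ⟪x, n i⟫ = c i }

/-- The cone `d(x)` of admissible reflection directions at `x`. -/
def dCone {J N : ℕ} (n : Fin N → EucSp J) (c : Fin N → ℝ) (d : Fin N → EucSp J)
    (x : EucSp J) : Set (EucSp J) :=
  coneGen (d '' ISet n c x)

/-- `(Z, Y)` solves the extended Skorokhod problem for `X`. -/
def SolvesESP {J N : ℕ} (n : Fin N → EucSp J) (c : Fin N → ℝ) (d : Fin N → EucSp J)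
    (X Z Y : ℝ → EucSp J) : Prop :=
  ContinuousOn Z (Ici 0) ∧ ContinuousOn Y (Ici 0) ∧
  Y 0 ∈ dCone n c d (Z 0) ∧
  (∀ t ∈ Ici (0:ℝ), Z t = X t + Y t) ∧
  (∀ t ∈ Ici (0:ℝ), Z t ∈ Gset n c) ∧
  (∀ s t : ℝ, 0 ≤ s → s < t →
    Y t - Y s ∈ coneGen (⋃ u ∈ Ioc s t, dCone n c d (Z u)))

/-- Assumption (B). -/
def AssumptionB {J N : ℕ} (n d : Fin N → EucSp J) : Prop :=
  ∃ δ : ℝ, 0 < δ ∧ ∃ B : Set (EucSp J),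
    IsCompact B ∧ Convex ℝ B ∧ (∀ z ∈ B, -z ∈ B) ∧ (0 : EucSp J) ∈ interior B ∧
    ∀ i : Fin N, ∀ z ∈ frontier B, |⟪z, n i⟫| < δ →
      ∀ ν : EucSp J, ‖ν‖ = 1 → (∀ y ∈ B, 0 ≤ ⟪ν, y - z⟫) → ⟪ν, d i⟫ = 0

/-- Assumption (π). -/
def AssumptionPi {J N : ℕ} (n : Fin N → EucSp J) (c : Fin N → ℝ) (d : Fin N → EucSp J)
    (proj : EucSp J → EucSp J) : Prop :=
  (∀ x, proj x ∈ Gset n c) ∧ (∀ x ∈ Gset n c, proj x = x) ∧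
  (∀ x, x ∉ Gset n c → proj x - x ∈ dCone n c d (proj x))

/-- The supremum norm `‖f‖_T` of `f` over `[0, T]`. -/
def supNorm {J : ℕ} (f : ℝ → EucSp J) (T : ℝ) : ℝ :=
  ⨆ s : Icc (0:ℝ) T, ‖f s.1‖

/-- The subspace (as a set) `H_x`. -/
def Hset {J N : ℕ} (n : Fin N → EucSp J) (c : Fin N → ℝ) (x : EucSp J) : Set (EucSp J) :=
  { y | ∀ i ∈ ISet n c x, ⟪y, n i⟫ = 0 }

/-- The smooth part `S` of the boundary. -/
def Sstar {J N : ℕ} (n : Fin N → EucSp J) (c : Fin N → ℝ) : Set (EucSp J) :=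
  { x ∈ frontier (Gset n c) | (ISet n c x).ncard = 1 }

/-- The nonsmooth part `N` of the boundary. -/
def Nstar {J N : ℕ} (n : Fin N → EucSp J) (c : Fin N → ℝ) : Set (EucSp J) :=
  { x ∈ frontier (Gset n c) | 2 ≤ (ISet n c x).ncard }

/-- The set `W`. -/
def Wstar {J N : ℕ} (n : Fin N → EucSp J) (c : Fin N → ℝ) (d : Fin N → EucSp J) :
    Set (EucSp J) :=
  { x ∈ Nstar n c | Submodule.span ℝ (Hset n c x ∪ dCone n c d x) ≠ ⊤ }

/-- The boundary jitter property on `[0, T)`. -/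
def Jitter {J N : ℕ} (n : Fin N → EucSp J) (c : Fin N → ℝ) (Z Y : ℝ → EucSp J)
    (T : ℝ≥0∞) : Prop :=
  (∀ t : ℝ, 0 ≤ t → ENNReal.ofReal t < T → Z t ∈ Sstar n c →
    ∀ s u : ℝ, s < t → t < u → ENNReal.ofReal u < T →
      ∃ a ∈ Ioo (max s 0) u, ∃ b ∈ Ioo (max s 0) u, Y a ≠ Y b) ∧
  (volume {t : ℝ | 0 ≤ t ∧ ENNReal.ofReal t < T ∧ Z t ∈ Nstar n c} = 0) ∧
  (Z 0 ∈ Nstar n c →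
    ∀ i ∈ ISet n c (Z 0), ∀ δ : ℝ, 0 < δ → ENNReal.ofReal δ < T →
      ∃ u ∈ Ioo (0:ℝ) δ, ISet n c (Z u) = {i}) ∧
  (∀ t : ℝ, 0 < t → ENNReal.ofReal t < T → Z t ∈ Nstar n c →
    ∀ i ∈ ISet n c (Z t), ∀ δ : ℝ, 0 < δ → δ < t →
      ∃ s ∈ Ioo (t - δ) t, ISet n c (Z s) = {i})

/-- `f` is right-continuous with finite left limits on `[0, T)`. -/
def DrOn {J : ℕ} (f : ℝ → EucSp J) (T : ℝ≥0∞) : Prop :=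
  (∀ t : ℝ, 0 ≤ t → ENNReal.ofReal t < T → Tendsto f (𝓝[>] t) (𝓝 (f t))) ∧
  (∀ t : ℝ, 0 < t → ENNReal.ofReal t < T → ∃ L, Tendsto f (𝓝[<] t) (𝓝 L))

/-- `f ∈ D_{ℓ,r}([0,T))`. -/
def DlrOn {J : ℕ} (f : ℝ → EucSp J) (T : ℝ≥0∞) : Prop :=
  (∀ t : ℝ, 0 < t → ENNReal.ofReal t < T → ∃ L, Tendsto f (𝓝[<] t) (𝓝 L)) ∧
  (∀ t : ℝ, 0 ≤ t → ENNReal.ofReal t < T → ∃ L, Tendsto f (𝓝[>] t) (𝓝 L)) ∧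
  (∀ t : ℝ, 0 < t → ENNReal.ofReal t < T →
    Tendsto f (𝓝[<] t) (𝓝 (f t)) ∨ Tendsto f (𝓝[>] t) (𝓝 (f t)))

/-- `(φ, η)` solves the derivative problem associated with `Z` for `ψ` on `[0, T)`. -/
def SolvesDPOn {J N : ℕ} (n : Fin N → EucSp J) (c : Fin N → ℝ) (d : Fin N → EucSp J)
    (Z ψ φ η : ℝ → EucSp J) (T : ℝ≥0∞) : Prop :=
  DrOn φ T ∧ DrOn η T ∧
  η 0 ∈ Submodule.span ℝ (dCone n c d (Z 0)) ∧
  (∀ t : ℝ, 0 ≤ t → ENNReal.ofReal t < T →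
    φ t = ψ t + η t ∧ φ t ∈ Hset n c (Z t)) ∧
  (∀ s t : ℝ, 0 ≤ s → s < t → ENNReal.ofReal t < T →
    η t - η s ∈ Submodule.span ℝ (⋃ u ∈ Ioc s t, dCone n c d (Z u)))

/-- Decomposition `Y = R L` where the components of `L` are nondecreasing and can
increase only when `Z` is on the corresponding face. -/
def LocalTimeProps {J N : ℕ} (n : Fin N → EucSp J) (c : Fin N → ℝ) (d : Fin N → EucSp J)
    (Z Y : ℝ → EucSp J) (L : ℝ → EucSp N) : Prop :=
  ContinuousOn L (Ici 0) ∧ L 0 = 0 ∧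
  (∀ t ∈ Ici (0:ℝ), ∀ i, 0 ≤ L t i) ∧
  (∀ i, MonotoneOn (fun t => L t i) (Ici 0)) ∧
  (∀ t ∈ Ici (0:ℝ), Y t = ∑ i, L t i • d i) ∧
  (∀ i : Fin N, ∀ s t : ℝ, 0 ≤ s → s ≤ t →
    (∀ u ∈ Icc s t, Z u ∉ {x ∈ frontier (Gset n c) | ⟪x, n i⟫ = c i}) →
    L s i = L t i)

/-- The dual set `B*`. -/
def dualSet {J : ℕ} (B : Set (EucSp J)) : Set (EucSp J) :=
  { y | ∀ z ∈ B, ⟪y, z⟫ ≤ 1 }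

/-- `frontComp Ls k y = Ls 0 (Ls 1 (⋯ (Ls (k-1) y)))`. -/
def frontComp {J : ℕ} (Ls : ℕ → (EucSp J → EucSp J)) : ℕ → EucSp J → EucSp J
  | 0, y => y
  | (k+1), y => frontComp Ls k (Ls k y)

/-- `backComp Ls k y = Ls (k-1) (⋯ (Ls 0 y))`. -/
def backComp {J : ℕ} (Ls : ℕ → (EucSp J → EucSp J)) : ℕ → EucSp J → EucSp J
  | 0, y => y
  | (k+1), y => Ls k (backComp Ls k y)

/-! ### Auxiliary development for `statement16` -/

section Statement16Aux

open Metric Pointwise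

/-- Geometric data packaging Assumption (B). -/
structure GeoData (J N : ℕ) where
  n : Fin N → EucSp J
  d : Fin N → EucSp J
  δ : ℝ
  B : Set (EucSp J)
  ρ : ℝ
  R : ℝ
  hδ : 0 < δ
  hBc : IsCompact B
  hBconv : Convex ℝ B
  hρ : 0 < ρ
  hρB : Metric.closedBall 0 ρ ⊆ B
  hRB : B ⊆ Metric.closedBall 0 R
  hgeom : ∀ i : Fin N, ∀ z ∈ frontier B, |⟪z, n i⟫| < δ →
      ∀ ν : EucSp J, ‖ν‖ = 1 → (∀ y ∈ B, 0 ≤ ⟪ν, y - z⟫) → ⟪ν, d i⟫ = 0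

namespace GeoData

variable {J N : ℕ} (G : GeoData J N)

/-- The subspace `H_A`. -/
def H (A : Set (Fin N)) : Submodule ℝ (EucSp J) where
  carrier := { y : EucSp J | ∀ i ∈ A, ⟪y, G.n i⟫ = 0 }
  add_mem' := fun ha hb i hi => by
    rw [inner_add_left, ha i hi, hb i hi, add_zero]
  zero_mem' := fun i _ => inner_zero_left _
  smul_mem' := fun r a ha i hi => by rw [real_inner_smul_left, ha i hi, mul_zero]

/-- The subspace `D_A`. -/
def D (A : Set (Fin N)) : Submodule ℝ (EucSp J) := Submodule.span ℝ (G.d '' A)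

/-- The closed convex set `C_A = B + H_A`. -/
def C (A : Set (Fin N)) : Set (EucSp J) := G.B + (G.H A : Set (EucSp J))

lemma mem_H_iff {A : Set (Fin N)} {y : EucSp J} :
    y ∈ G.H A ↔ ∀ i ∈ A, ⟪y, G.n i⟫ = 0 := Iff.rfl

lemma H_inner_n {A : Set (Fin N)} {y : EucSp J} (hy : y ∈ G.H A) {i : Fin N} (hi : i ∈ A) :
    ⟪y, G.n i⟫ = 0 := hy i hi

lemma H_mono {A A' : Set (Fin N)} (h : A' ⊆ A) : G.H A ≤ G.H A' :=
  fun _ hy i hi => hy i (h hi)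

lemma D_inner_eq_zero {A : Set (Fin N)} {μ : EucSp J} (h : ∀ i ∈ A, ⟪μ, G.d i⟫ = 0)
    {w : EucSp J} (hw : w ∈ G.D A) : ⟪μ, w⟫ = 0 := by
  induction hw using Submodule.span_induction with
  | mem x hx => obtain ⟨i, hi, rfl⟩ := hx; exact h i hi
  | zero => exact inner_zero_right _
  | add x y _ _ hx hy => rw [inner_add_right, hx, hy, add_zero]
  | smul a x _ hx => rw [real_inner_smul_right, hx, mul_zero]

lemma zero_mem_B : (0 : EucSp J) ∈ G.B := G.hρB (mem_closedBall_self G.hρ.le)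

lemma R_nonneg : 0 ≤ G.R := by
  have := G.hRB G.zero_mem_B
  simpa using this

lemma mem_C_iff {A : Set (Fin N)} {v : EucSp J} :
    v ∈ G.C A ↔ ∃ b ∈ G.B, ∃ h ∈ G.H A, b + h = v := by
  constructor
  · rintro ⟨b, hb, h, hh, rfl⟩
    exact ⟨b, hb, h, hh, rfl⟩
  · rintro ⟨b, hb, h, hh, rfl⟩
    exact ⟨b, hb, h, hh, rfl⟩

lemma B_subset_C {A : Set (Fin N)} : G.B ⊆ G.C A := fun b hb =>
  (G.mem_C_iff).2 ⟨b, hb, 0, (G.H A).zero_mem, add_zero b⟩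

lemma C_add_H {A : Set (Fin N)} {v h : EucSp J} (hv : v ∈ G.C A) (hh : h ∈ G.H A) :
    v + h ∈ G.C A := by
  obtain ⟨b, hb, h0, hh0, rfl⟩ := (G.mem_C_iff).1 hv
  exact (G.mem_C_iff).2 ⟨b, hb, h0 + h, (G.H A).add_mem hh0 hh, (add_assoc _ _ _).symm⟩

lemma zero_mem_interior_C {A : Set (Fin N)} : (0 : EucSp J) ∈ interior (G.C A) :=
  mem_interior.2 ⟨Metric.ball 0 G.ρ,
    (Metric.ball_subset_closedBall.trans G.hρB).trans G.B_subset_C, Metric.isOpen_ball,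
    Metric.mem_ball_self G.hρ⟩

lemma C_nhds (A : Set (Fin N)) : G.C A ∈ 𝓝 (0 : EucSp J) :=
  mem_interior_iff_mem_nhds.1 G.zero_mem_interior_C

lemma C_absorbent (A : Set (Fin N)) : Absorbent ℝ (G.C A) :=
  absorbent_nhds_zero (G.C_nhds A)

lemma C_convex (A : Set (Fin N)) : Convex ℝ (G.C A) :=
  G.hBconv.add (G.H A).convex

lemma C_closed (A : Set (Fin N)) : IsClosed (G.C A) :=
  IsClosed.add_left_of_isCompact (Submodule.closed_of_finiteDimensional _) G.hBc

lemma mem_C_of_gauge_le_one {A : Set (Fin N)} {v : EucSp J}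
    (h : gauge (G.C A) v ≤ 1) : v ∈ G.C A := by
  have := (gauge_le_one_iff_mem_closure (G.C_convex A) (G.C_nhds A)).1 h
  rwa [(G.C_closed A).closure_eq] at this

lemma not_mem_interior_C {A : Set (Fin N)} {v : EucSp J}
    (h : 1 ≤ gauge (G.C A) v) : v ∉ interior (G.C A) := fun hv =>
  absurd (interior_subset_gauge_lt_one _ hv) (not_lt.2 h)

lemma gauge_C_add_H {A : Set (Fin N)} (v : EucSp J) {h : EucSp J} (hh : h ∈ G.H A) :
    gauge (G.C A) (v + h) = gauge (G.C A) v := by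
  have key : ∀ (w hw : EucSp J), hw ∈ G.H A → ∀ r : ℝ, 0 < r → w ∈ r • G.C A →
      w + hw ∈ r • G.C A := by
    intro w hw hhw r hr hwr
    rw [Set.mem_smul_set_iff_inv_smul_mem₀ hr.ne'] at hwr ⊢
    rw [smul_add]
    exact G.C_add_H hwr ((G.H A).smul_mem _ hhw)
  have hset : { r ∈ Set.Ioi (0:ℝ) | v + h ∈ r • G.C A }
      = { r ∈ Set.Ioi (0:ℝ) | v ∈ r • G.C A } := by
    ext r
    simp only [Set.mem_setOf_eq, Set.mem_Ioi]
    constructor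
    · rintro ⟨hr, hmem⟩
      refine ⟨hr, ?_⟩
      have := key (v + h) (-h) ((G.H A).neg_mem hh) r hr hmem
      simpa using this
    · rintro ⟨hr, hmem⟩
      exact ⟨hr, key v h hh r hr hmem⟩
  rw [gauge_def, gauge_def, hset]

lemma frontier_of_inward {b ν : EucSp J} (hb : b ∈ G.B) (hν1 : ‖ν‖ = 1)
    (hin : ∀ y ∈ G.B, 0 ≤ ⟪ν, y - b⟫) : b ∈ frontier G.B := by
  have hbint : b ∉ interior G.B := by
    intro hbint
    obtain ⟨ε, hε, hball⟩ := Metric.mem_nhds_iff.1 (mem_interior_iff_mem_nhds.1 hbint)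
    have hy : b - (ε / 2) • ν ∈ G.B := by
      apply hball
      simp only [Metric.mem_ball, dist_eq_norm]
      rw [show b - (ε / 2) • ν - b = -((ε/2) • ν) by abel, norm_neg, norm_smul, hν1,
        mul_one, Real.norm_eq_abs, abs_of_pos (half_pos hε)]
      linarith
    have := hin _ hy
    rw [show b - (ε / 2) • ν - b = -((ε/2) • ν) by abel, inner_neg_right,
      real_inner_smul_right, real_inner_self_eq_norm_mul_norm, hν1] at this
    nlinarith
  exact ⟨subset_closure hb, hbint⟩

/-- Lemma U : `H_A ∩ D_A = 0` under Assumption (B). -/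
lemma H_inter_D (hn1 : ∀ i, ‖G.n i‖ = 1) {A : Set (Fin N)} {v : EucSp J}
    (hvH : v ∈ G.H A) (hvD : v ∈ G.D A) : v = 0 := by
  by_contra hv
  have hvnorm : 0 < ‖v‖ := norm_pos_iff.2 hv
  set K : Set (EucSp J) := G.B ∩ (G.H A : Set (EucSp J)) with hK
  have hKc : IsCompact K := G.hBc.inter_right (Submodule.closed_of_finiteDimensional _)
  have h0K : (0 : EucSp J) ∈ K := ⟨G.zero_mem_B, (G.H A).zero_mem⟩
  have hcont : Continuous fun y : EucSp J => ⟪v, y⟫ :=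
    Continuous.inner continuous_const continuous_id
  obtain ⟨z, hzK, hzmax⟩ := hKc.exists_isMaxOn ⟨0, h0K⟩ hcont.continuousOn
  set ε : ℝ := G.δ / (2 * ‖v‖) with hε
  have hεpos : 0 < ε := div_pos G.hδ (by positivity)
  have hεv : ε * ‖v‖ = G.δ / 2 := by
    rw [hε, div_mul_eq_mul_div, mul_div_mul_right _ _ hvnorm.ne']
  set u : EucSp J := z + ε • v with hu
  have huH : u ∈ G.H A := (G.H A).add_mem hzK.2 ((G.H A).smul_mem _ hvH)
  have hunotB : u ∉ G.B := by
    intro huB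
    have huK : u ∈ K := ⟨huB, huH⟩
    have h7 : ⟪v, u⟫ ≤ ⟪v, z⟫ := hzmax huK
    rw [hu, inner_add_right, real_inner_smul_right, real_inner_self_eq_norm_mul_norm] at h7
    nlinarith [mul_pos hεpos (mul_pos hvnorm hvnorm)]
  obtain ⟨q, hqB, hqmin⟩ := exists_norm_eq_iInf_of_complete_convex ⟨0, G.zero_mem_B⟩
    (G.hBc.isClosed.isComplete) G.hBconv u
  have hchar := (norm_eq_iInf_iff_real_inner_le_zero G.hBconv hqB).1 hqmin
  have hqu : q ≠ u := fun h => hunotB (h ▸ hqB)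
  have hqunorm : 0 < ‖q - u‖ := by
    rw [norm_pos_iff, sub_ne_zero]; exact hqu
  set ν : EucSp J := ‖q - u‖⁻¹ • (q - u) with hν
  have hν1 : ‖ν‖ = 1 := by
    rw [hν, norm_smul, norm_inv, norm_norm, inv_mul_cancel₀ hqunorm.ne']
  have hin : ∀ y ∈ G.B, 0 ≤ ⟪ν, y - q⟫ := by
    intro y hy
    have := hchar y hy
    rw [hν, real_inner_smul_left]
    have h2 : ⟪q - u, y - q⟫ = -⟪u - q, y - q⟫ := by
      rw [← inner_neg_left]; congr 1; abel
    rw [h2]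
    have : 0 ≤ -⟪u - q, y - q⟫ := by linarith
    positivity
  have hqfr : q ∈ frontier G.B := G.frontier_of_inward hqB hν1 hin
  have hqdist : ‖u - q‖ ≤ ε * ‖v‖ := by
    have h1 : ‖u - q‖ ≤ ‖u - z‖ := by
      rw [hqmin]
      have hbdd : BddBelow (Set.range fun w : G.B => ‖u - (w : EucSp J)‖) :=
        ⟨0, by rintro r ⟨w, rfl⟩; exact norm_nonneg _⟩
      exact ciInf_le hbdd (⟨z, hzK.1⟩ : G.B)
    have h2 : ‖u - z‖ = ε * ‖v‖ := by
      rw [hu, show z + ε • v - z = ε • v by abel, norm_smul]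
      simp [abs_of_pos hεpos]
    linarith
  have hheights : ∀ i ∈ A, |⟪q, G.n i⟫| < G.δ := by
    intro i hi
    have h0 : ⟪u, G.n i⟫ = 0 := huH i hi
    have h1 : ⟪q, G.n i⟫ = ⟪q - u, G.n i⟫ := by
      rw [inner_sub_left, h0, sub_zero]
    rw [h1]
    calc |⟪q - u, G.n i⟫| ≤ ‖q - u‖ * ‖G.n i‖ := abs_real_inner_le_norm _ _
      _ = ‖u - q‖ := by rw [hn1 i, mul_one, norm_sub_rev]
      _ ≤ ε * ‖v‖ := hqdist
      _ = G.δ / 2 := hεv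
      _ < G.δ := by linarith [G.hδ]
  have hd : ∀ i ∈ A, ⟪ν, G.d i⟫ = 0 := fun i hi =>
    G.hgeom i q hqfr (hheights i hi) ν hν1 hin
  have hνv : ⟪ν, v⟫ = 0 := G.D_inner_eq_zero hd hvD
  have h3 : ⟪ν, u - q⟫ = -‖q - u‖ := by
    rw [hν, real_inner_smul_left, show u - q = -(q - u) by abel, inner_neg_right,
      real_inner_self_eq_norm_mul_norm]
    field_simp
  have h4 : 0 ≤ ⟪ν, z - q⟫ := hin z hzK.1
  have h5 : ⟪ν, u - z⟫ = ε * ⟪ν, v⟫ := by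
    rw [hu, show z + ε • v - z = ε • v by abel, real_inner_smul_right]
  have h6 : ⟪ν, u - z⟫ = ⟪ν, u - q⟫ - ⟪ν, z - q⟫ := by
    rw [← inner_sub_right]; congr 1; abel
  rw [hνv, mul_zero] at h5
  rw [h5, h3] at h6
  linarith

lemma adm_id (hn1 : ∀ i, ‖G.n i‖ = 1) {A' : Set (Fin N)} {L : EucSp J →ₗ[ℝ] EucSp J}
    (hL : ∀ y, L y ∈ G.H A' ∧ L y - y ∈ G.D A') {h : EucSp J} (hh : h ∈ G.H A') :
    L h = h := by
  have h1 : L h - h ∈ G.H A' := (G.H A').sub_mem (hL h).1 hh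
  have h2 : L h - h = 0 := G.H_inter_D hn1 h1 (hL h).2
  rw [sub_eq_zero] at h2
  exact h2

/-- Supporting hyperplane at a non-interior point of `C_A`. -/
lemma exists_normal {A : Set (Fin N)} {p : EucSp J} (hpC : p ∈ G.C A)
    (hpint : p ∉ interior (G.C A)) :
    ∃ μ : EucSp J, μ ≠ 0 ∧ (∀ y ∈ G.C A, ⟪μ, y⟫ ≤ ⟪μ, p⟫) ∧ 0 < ⟪μ, p⟫ := by
  obtain ⟨f, hf⟩ := geometric_hahn_banach_open_point ((G.C_convex A).interior)
    isOpen_interior hpint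
  set μ : EucSp J := (InnerProductSpace.toDual ℝ (EucSp J)).symm f with hμdef
  have hμ : ∀ y, ⟪μ, y⟫ = f y := fun y => InnerProductSpace.toDual_symm_apply
  have hfp : 0 < f p := by
    have := hf 0 G.zero_mem_interior_C
    rwa [map_zero] at this
  have hμne : μ ≠ 0 := by
    intro h0
    have : ⟪μ, p⟫ = 0 := by rw [h0, inner_zero_left]
    rw [hμ] at this
    linarith
  refine ⟨μ, hμne, ?_, by rw [hμ]; exact hfp⟩
  intro y hy
  rw [hμ, hμ]
  by_contra hlt
  push_neg at hlt
  have hfy : 0 < f y := hfp.trans hlt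
  set a : ℝ := (1 - f p / f y) / 2 with ha
  have hfpfy : f p / f y < 1 := (div_lt_one hfy).2 hlt
  have hfpfy0 : 0 < f p / f y := div_pos hfp hfy
  have ha0 : 0 < a := by rw [ha]; linarith
  have hb0 : (0:ℝ) ≤ 1 - a := by rw [ha]; linarith
  have hcombo : a • (0 : EucSp J) + (1 - a) • y ∈ interior (G.C A) :=
    (G.C_convex A).combo_interior_closure_mem_interior G.zero_mem_interior_C
      (subset_closure hy) ha0 hb0 (by ring)
  have := hf _ hcombo
  rw [smul_zero, zero_add, ContinuousLinearMap.map_smul, smul_eq_mul] at this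
  have hba : (1 - a) * f y = (f y + f p) / 2 := by
    rw [ha]
    field_simp
    ring
  rw [hba] at this
  linarith

lemma muPerpH {A : Set (Fin N)} {p μ : EucSp J} (hpC : p ∈ G.C A)
    (hmax : ∀ y ∈ G.C A, ⟪μ, y⟫ ≤ ⟪μ, p⟫) {h : EucSp J} (hh : h ∈ G.H A) :
    ⟪μ, h⟫ = 0 := by
  have h1 := hmax _ (G.C_add_H hpC hh)
  have h2 := hmax _ (G.C_add_H hpC ((G.H A).neg_mem hh))
  rw [inner_add_right] at h1 h2
  rw [inner_neg_right] at h2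
  linarith

lemma face_geom {A : Set (Fin N)} {q μ : EucSp J} (hq : q ∈ G.C A)
    (hmaxq : ∀ y ∈ G.C A, ⟪μ, y⟫ ≤ ⟪μ, q⟫) (hμne : μ ≠ 0) {i : Fin N} (hiA : i ∈ A)
    (hn1 : ∀ i, ‖G.n i‖ = 1) (hqn : |⟪q, G.n i⟫| < G.δ) : ⟪μ, G.d i⟫ = 0 := by
  obtain ⟨b, hb, h, hh, hbh⟩ := (G.mem_C_iff).1 hq
  have hμnorm : 0 < ‖μ‖ := norm_pos_iff.2 hμne
  set ν : EucSp J := -(‖μ‖⁻¹ • μ) with hν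
  have hν1 : ‖ν‖ = 1 := by
    rw [hν, norm_neg, norm_smul, norm_inv, norm_norm, inv_mul_cancel₀ hμnorm.ne']
  have hμh : ⟪μ, h⟫ = 0 := G.muPerpH hq hmaxq hh
  have hμb : ⟪μ, b⟫ = ⟪μ, q⟫ := by
    rw [← hbh, inner_add_right, hμh, add_zero]
  have hin : ∀ y ∈ G.B, 0 ≤ ⟪ν, y - b⟫ := by
    intro y hy
    have h1 : ⟪μ, y⟫ ≤ ⟪μ, b⟫ := hμb ▸ hmaxq y (G.B_subset_C hy)
    rw [hν, inner_neg_left, real_inner_smul_left, inner_sub_right]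
    have h2 : ⟪μ, y⟫ - ⟪μ, b⟫ ≤ 0 := by linarith
    have : ‖μ‖⁻¹ * (⟪μ, y⟫ - ⟪μ, b⟫) ≤ 0 :=
      mul_nonpos_of_nonneg_of_nonpos (by positivity) h2
    linarith
  have hbfr : b ∈ frontier G.B := G.frontier_of_inward hb hν1 hin
  have hbn : |⟪b, G.n i⟫| < G.δ := by
    have : ⟪b, G.n i⟫ = ⟪q, G.n i⟫ := by
      rw [← hbh, inner_add_left, hh i hiA, add_zero]
    rwa [this]
  have := G.hgeom i b hbfr hbn ν hν1 hin
  rw [hν, inner_neg_left, real_inner_smul_left, neg_eq_zero] at this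
  rcases mul_eq_zero.1 this with h' | h'
  · exact absurd h' (by positivity)
  · exact h'

/-- Single-step invariance: admissible maps preserve `C_A`. -/
lemma stepC (hn1 : ∀ i, ‖G.n i‖ = 1) {A A' : Set (Fin N)} (hA' : A' ⊆ A)
    {L : EucSp J →ₗ[ℝ] EucSp J} (hL : ∀ y, L y ∈ G.H A' ∧ L y - y ∈ G.D A') :
    ∀ v ∈ G.C A, L v ∈ G.C A := by
  have hBstep : ∀ b ∈ G.B, L b ∈ G.C A := by
    have hcont : Continuous fun b : EucSp J => gauge (G.C A) (L b) :=
      (continuous_gauge (G.C_convex A) (G.C_nhds A)).comp L.continuous_of_finiteDimensional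
    obtain ⟨b₀, hb₀, hmax⟩ := G.hBc.exists_isMaxOn ⟨0, G.zero_mem_B⟩ hcont.continuousOn
    set β : ℝ := gauge (G.C A) (L b₀) with hβdef
    rcases le_or_gt β 1 with hβ | hβ
    · intro b hb
      exact G.mem_C_of_gauge_le_one ((hmax hb).trans hβ)
    · exfalso
      have hβ0 : (0:ℝ) < β := lt_trans one_pos hβ
      set p : EucSp J := β⁻¹ • L b₀ with hp
      have hgp : gauge (G.C A) p = 1 := by
        rw [hp, gauge_smul_of_nonneg (inv_nonneg.2 hβ0.le), ← hβdef, smul_eq_mul,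
          inv_mul_cancel₀ hβ0.ne']
      have hpC : p ∈ G.C A := G.mem_C_of_gauge_le_one hgp.le
      have hpint : p ∉ interior (G.C A) := G.not_mem_interior_C hgp.ge
      obtain ⟨μ, hμne, hmaxμ, hσpos⟩ := G.exists_normal hpC hpint
      have hd : ∀ i ∈ A', ⟪μ, G.d i⟫ = 0 := by
        intro i hi
        apply G.face_geom hpC hmaxμ hμne (hA' hi) hn1
        have : ⟪p, G.n i⟫ = 0 := by
          rw [hp, real_inner_smul_left, (hL b₀).1 i hi, mul_zero]
        rw [this, abs_zero]
        exact G.hδ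
      have h0 : ⟪μ, L b₀ - b₀⟫ = 0 := G.D_inner_eq_zero hd (hL b₀).2
      rw [inner_sub_right] at h0
      have h2 : ⟪μ, b₀⟫ ≤ ⟪μ, p⟫ := hmaxμ b₀ (G.B_subset_C hb₀)
      have h3 : ⟪μ, L b₀⟫ = β * ⟪μ, p⟫ := by
        rw [hp, real_inner_smul_right, ← mul_assoc, mul_inv_cancel₀ hβ0.ne', one_mul]
      nlinarith
  intro v hv
  obtain ⟨b, hb, h, hh, rfl⟩ := (G.mem_C_iff).1 hv
  have hLh : L h = h := G.adm_id hn1 hL (G.H_mono hA' hh)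
  rw [map_add, hLh]
  exact G.C_add_H (hBstep b hb) hh

lemma chainC (hn1 : ∀ i, ‖G.n i‖ = 1) {A : Set (Fin N)} (K : ℕ) (As : ℕ → Set (Fin N))
    (Ls : ℕ → EucSp J →ₗ[ℝ] EucSp J) (hsub : ∀ k < K, As k ⊆ A)
    (hadm : ∀ k < K, ∀ y, Ls k y ∈ G.H (As k) ∧ Ls k y - y ∈ G.D (As k))
    {v : EucSp J} (hv : v ∈ G.C A) :
    ∀ k ≤ K, backComp (fun k x => Ls k x) k v ∈ G.C A := by
  intro k hk
  induction k with
  | zero => exact hv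
  | succ k ih =>
    have hkK : k < K := lt_of_lt_of_le (Nat.lt_succ_self k) hk
    exact G.stepC hn1 (hsub k hkK) (hadm k hkK) _ (ih (le_of_lt hkK))

lemma norm_le_R_of_perp {A : Set (Fin N)} {v : EucSp J} (hv : v ∈ G.C A)
    (hperp : ∀ h ∈ G.H A, ⟪v, h⟫ = 0) : ‖v‖ ≤ G.R := by
  obtain ⟨b, hb, h, hh, hbh⟩ := (G.mem_C_iff).1 hv
  have h1 : ⟪v, v⟫ = ⟪v, b⟫ := by
    nth_rewrite 2 [← hbh]
    rw [inner_add_right, hperp h hh, add_zero]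
  have h2 : ⟪v, b⟫ ≤ ‖v‖ * ‖b‖ := real_inner_le_norm _ _
  have h3 : ‖b‖ ≤ G.R := by
    have := G.hRB hb
    simpa [Metric.mem_closedBall, dist_eq_norm] using this
  rcases eq_or_lt_of_le (norm_nonneg v) with h4 | h4
  · rw [← h4]; exact G.R_nonneg
  · have h5 : ‖v‖ * ‖v‖ ≤ ‖v‖ * G.R := by
      rw [← real_inner_self_eq_norm_mul_norm]
      calc ⟪v, v⟫ = ⟪v, b⟫ := h1
        _ ≤ ‖v‖ * ‖b‖ := h2
        _ ≤ ‖v‖ * G.R := by nlinarith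
    exact le_of_mul_le_mul_left h5 h4

lemma reduceRep {A : Set (Fin N)} {v : EucSp J} (hv : v ∈ G.C A) :
    ∃ w : EucSp J, w ∈ G.C A ∧ (∀ h ∈ G.H A, ⟪w, h⟫ = 0) ∧ ‖w‖ ≤ G.R ∧
      (∀ μ : EucSp J, (∀ h ∈ G.H A, ⟪μ, h⟫ = 0) → ⟪μ, w⟫ = ⟪μ, v⟫) ∧
      (∀ i ∈ A, ⟪w, G.n i⟫ = ⟪v, G.n i⟫) ∧
      gauge (G.C A) w = gauge (G.C A) v := by
  set h₀ : EucSp J := ((G.H A).orthogonalProjectionOnto v : EucSp J) with hh₀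
  have hh₀H : h₀ ∈ G.H A := SetLike.coe_mem _
  refine ⟨v - h₀, ?_, ?_, ?_, ?_, ?_, ?_⟩
  · have := G.C_add_H hv ((G.H A).neg_mem hh₀H)
    simpa [sub_eq_add_neg] using this
  · intro h hh
    have hm := Submodule.sub_starProjection_mem_orthogonal (K := G.H A) v
    have := (Submodule.mem_orthogonal _ _).1 hm h hh
    rw [real_inner_comm]
    exact this
  · apply G.norm_le_R_of_perp
    · have := G.C_add_H hv ((G.H A).neg_mem hh₀H)
      simpa [sub_eq_add_neg] using this
    · intro h hh
      have hm := Submodule.sub_starProjection_mem_orthogonal (K := G.H A) v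
      have := (Submodule.mem_orthogonal _ _).1 hm h hh
      rw [real_inner_comm]
      exact this
  · intro μ hμ
    rw [inner_sub_right, hμ h₀ hh₀H, sub_zero]
  · intro i hi
    rw [inner_sub_left, hh₀H i hi, sub_zero]
  · have := G.gauge_C_add_H v ((G.H A).neg_mem hh₀H)
    simpa [sub_eq_add_neg] using this

/-- The main uniform contraction estimate for covering products. -/
lemma contractC (hn1 : ∀ i, ‖G.n i‖ = 1) (A : Set (Fin N))
    (hgood : G.H A ⊔ G.D A = ⊤) :
    ∃ β : ℝ, 0 ≤ β ∧ β < 1 ∧ ∀ (K : ℕ) (As : ℕ → Set (Fin N))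
      (Ls : ℕ → EucSp J →ₗ[ℝ] EucSp J),
      (∀ k < K, As k ⊆ A) →
      (∀ k < K, ∀ y, Ls k y ∈ G.H (As k) ∧ Ls k y - y ∈ G.D (As k)) →
      (∀ i ∈ A, ∃ k, k < K ∧ i ∈ As k) →
      ∀ v ∈ G.C A, gauge (G.C A) (backComp (fun k x => Ls k x) K v) ≤ β := by
  by_contra hcon
  push_neg at hcon
  have hseq : ∀ m : ℕ, ∃ (K : ℕ) (As : ℕ → Set (Fin N)) (Ls : ℕ → EucSp J →ₗ[ℝ] EucSp J)
      (v : EucSp J),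
      (∀ k < K, As k ⊆ A) ∧
      (∀ k < K, ∀ y, Ls k y ∈ G.H (As k) ∧ Ls k y - y ∈ G.D (As k)) ∧
      (∀ i ∈ A, ∃ k, k < K ∧ i ∈ As k) ∧ v ∈ G.C A ∧
      1 - 1/((m:ℝ)+1) < gauge (G.C A) (backComp (fun k x => Ls k x) K v) := by
    intro m
    have hm1 : (0:ℝ) < 1/((m:ℝ)+1) := by positivity
    have hm2 : 1/((m:ℝ)+1) ≤ 1 := by
      rw [div_le_one (by positivity)]
      linarith [Nat.cast_nonneg (α := ℝ) m]
    obtain ⟨K, As, Ls, hc1, hc2, hc3, v, hvC, hgt⟩ :=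
      hcon (1 - 1/((m:ℝ)+1)) (by linarith) (by linarith)
    exact ⟨K, As, Ls, v, hc1, hc2, hc3, hvC, hgt⟩
  choose Kf Asf Lsf vf hsub hadm hcov hvCf hgt using hseq
  set T : ℕ → EucSp J := fun m => backComp (fun k x => Lsf m k x) (Kf m) (vf m) with hT
  have hTC : ∀ m, T m ∈ G.C A := fun m =>
    G.chainC hn1 (Kf m) _ _ (hsub m) (hadm m) (hvCf m) (Kf m) le_rfl
  have hrep := fun m => G.reduceRep (hTC m)
  choose w hwC hwperp hwR hwμ hwn hwg using hrep
  obtain ⟨vstar, hvstar_mem, φ, hφmono, hφtend⟩ :=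
    (isCompact_closedBall (0 : EucSp J) G.R).tendsto_subseq
      (fun m => by simpa [Metric.mem_closedBall, dist_eq_norm] using hwR m)
  have hvstarC : vstar ∈ G.C A :=
    (G.C_closed A).mem_of_tendsto hφtend (Filter.Eventually.of_forall fun m => hwC (φ m))
  have hgcont : Continuous (gauge (G.C A)) := continuous_gauge (G.C_convex A) (G.C_nhds A)
  have hγ : Filter.Tendsto (fun m => gauge (G.C A) (w (φ m))) Filter.atTop
      (𝓝 (gauge (G.C A) vstar)) := (hgcont.tendsto vstar).comp hφtend
  have hlow : Filter.Tendsto (fun m : ℕ => 1 - 1/((m:ℝ)+1)) Filter.atTop (𝓝 1) := by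
    have h2 := Filter.Tendsto.const_sub (1:ℝ) tendsto_one_div_add_atTop_nhds_zero_nat
    simpa using h2
  have hgv : gauge (G.C A) vstar = 1 := by
    refine le_antisymm (gauge_le_one_of_mem hvstarC) ?_
    refine le_of_tendsto_of_tendsto' hlow hγ fun m => ?_
    have hφm : (m:ℝ) ≤ φ m := Nat.cast_le.2 hφmono.le_apply
    have h1 : 1/((φ m:ℝ)+1) ≤ 1/((m:ℝ)+1) := by
      apply one_div_le_one_div_of_le (by positivity)
      linarith
    calc 1 - 1/((m:ℝ)+1) ≤ 1 - 1/((φ m:ℝ)+1) := by linarith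
      _ ≤ gauge (G.C A) (T (φ m)) := (hgt (φ m)).le
      _ = gauge (G.C A) (w (φ m)) := (hwg (φ m)).symm
  obtain ⟨μ, hμne, hmaxμ, hσpos⟩ := G.exists_normal hvstarC (G.not_mem_interior_C hgv.ge)
  set σ : ℝ := ⟪μ, vstar⟫ with hσ
  have hμH : ∀ h ∈ G.H A, ⟪μ, h⟫ = 0 := fun h hh => G.muPerpH hvstarC hmaxμ hh
  have hinncont : Continuous fun y : EucSp J => ⟪μ, y⟫ :=
    Continuous.inner continuous_const continuous_id
  have hkey : ∃ ε₀ > 0, ∀ p ∈ G.C A, σ - ε₀ ≤ ⟪μ, p⟫ →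
      ∃ q, (q ∈ G.C A ∧ σ ≤ ⟪μ, q⟫) ∧ ∀ i ∈ A, |⟪p - q, G.n i⟫| < G.δ := by
    by_contra hno
    push_neg at hno
    have hno' : ∀ j : ℕ, ∃ p ∈ G.C A, σ - 1/((j:ℝ)+1) ≤ ⟪μ, p⟫ ∧
        ∀ q, (q ∈ G.C A ∧ σ ≤ ⟪μ, q⟫) → ∃ i ∈ A, G.δ ≤ |⟪p - q, G.n i⟫| := by
      intro j
      obtain ⟨p, hp1, hp2, hp3⟩ := hno (1/((j:ℝ)+1)) (by positivity)
      refine ⟨p, hp1, hp2, fun q hq => ?_⟩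
      exact hp3 q hq
    choose pf hpC hpμ hpbad using hno'
    have hprep := fun j => G.reduceRep (hpC j)
    choose p' hp'C hp'perp hp'R hp'μ hp'n hp'g using hprep
    obtain ⟨qstar, hqmem, ψ, hψmono, hψtend⟩ :=
      (isCompact_closedBall (0 : EucSp J) G.R).tendsto_subseq
        (fun j => by simpa [Metric.mem_closedBall, dist_eq_norm] using hp'R j)
    have hqC : qstar ∈ G.C A :=
      (G.C_closed A).mem_of_tendsto hψtend (Filter.Eventually.of_forall fun j => hp'C (ψ j))
    have hμq : σ ≤ ⟪μ, qstar⟫ := by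
      have htq : Filter.Tendsto (fun j => ⟪μ, p' (ψ j)⟫) Filter.atTop (𝓝 ⟪μ, qstar⟫) :=
        (hinncont.tendsto qstar).comp hψtend
      have hlow2 : Filter.Tendsto (fun j : ℕ => σ - 1/((j:ℝ)+1)) Filter.atTop (𝓝 σ) := by
        have h2 := Filter.Tendsto.const_sub σ tendsto_one_div_add_atTop_nhds_zero_nat
        simpa using h2
      refine le_of_tendsto_of_tendsto' hlow2 htq fun j => ?_
      have hψj : (j:ℝ) ≤ ψ j := Nat.cast_le.2 hψmono.le_apply
      have h1 : 1/((ψ j:ℝ)+1) ≤ 1/((j:ℝ)+1) := by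
        apply one_div_le_one_div_of_le (by positivity)
        linarith
      rw [hp'μ (ψ j) μ hμH]
      have := hpμ (ψ j)
      linarith
    obtain ⟨M, hM⟩ := Metric.tendsto_atTop.1 hψtend G.δ G.hδ
    obtain ⟨i, hiA, hige⟩ := hpbad (ψ M) qstar ⟨hqC, hμq⟩
    have heq : ⟪pf (ψ M) - qstar, G.n i⟫ = ⟪p' (ψ M) - qstar, G.n i⟫ := by
      rw [inner_sub_left, inner_sub_left, hp'n (ψ M) i hiA]
    have hlt : |⟪p' (ψ M) - qstar, G.n i⟫| < G.δ := by
      calc |⟪p' (ψ M) - qstar, G.n i⟫| ≤ ‖p' (ψ M) - qstar‖ * ‖G.n i‖ :=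
          abs_real_inner_le_norm _ _
        _ = ‖p' (ψ M) - qstar‖ := by rw [hn1 i, mul_one]
        _ < G.δ := by have := hM M le_rfl; rwa [dist_eq_norm] at this
    rw [heq] at hige
    linarith
  obtain ⟨ε₀, hε₀pos, hkey'⟩ := hkey
  have htw : Filter.Tendsto (fun m => ⟪μ, w (φ m)⟫) Filter.atTop (𝓝 σ) :=
    (hinncont.tendsto vstar).comp hφtend
  have hev : ∀ᶠ m in Filter.atTop, σ - ε₀ ≤ ⟪μ, w (φ m)⟫ :=
    htw.eventually (eventually_ge_nhds (by linarith))
  obtain ⟨M0, hM0⟩ := hev.exists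
  set m := φ M0 with hm
  have hTμ : σ - ε₀ ≤ ⟪μ, T m⟫ := by
    rw [← hwμ m μ hμH]
    exact hM0
  have keystep : ∀ (A'' : Set (Fin N)), A'' ⊆ A → ∀ p ∈ G.C A,
      (∀ i ∈ A'', ⟪p, G.n i⟫ = 0) → σ - ε₀ ≤ ⟪μ, p⟫ → ∀ i ∈ A'', ⟪μ, G.d i⟫ = 0 := by
    intro A'' hA'' p hpC hpn hpμ i hi
    obtain ⟨q, ⟨hqC, hqμ⟩, hqn⟩ := hkey' p hpC hpμ
    have hmaxq : ∀ y ∈ G.C A, ⟪μ, y⟫ ≤ ⟪μ, q⟫ := fun y hy => (hmaxμ y hy).trans hqμ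
    apply G.face_geom hqC hmaxq hμne (hA'' hi) hn1
    have h1 : ⟪q, G.n i⟫ = ⟪p, G.n i⟫ - ⟪p - q, G.n i⟫ := by
      rw [inner_sub_left]; ring
    rw [h1, hpn i hi, zero_sub, abs_neg]
    exact hqn i (hA'' hi)
  set u : ℕ → EucSp J := fun k => backComp (fun k x => Lsf m k x) k (vf m) with hu
  have huC : ∀ k ≤ Kf m, u k ∈ G.C A :=
    fun k hk => G.chainC hn1 (Kf m) _ _ (hsub m) (hadm m) (hvCf m) k hk
  have hustep : ∀ k, u (k+1) = Lsf m k (u k) := fun k => rfl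
  have descend : ∀ j, j ≤ Kf m → σ - ε₀ ≤ ⟪μ, u (Kf m - j)⟫ := by
    intro j
    induction j with
    | zero =>
      intro _
      rw [Nat.sub_zero]
      have : u (Kf m) = T m := rfl
      rw [this]
      exact hTμ
    | succ j ih =>
      intro hj
      have hj' : j ≤ Kf m := by omega
      have ihv := ih hj'
      have hk1 : Kf m - j = (Kf m - (j+1)) + 1 := by omega
      have hkK : Kf m - (j+1) < Kf m := by omega
      rw [hk1] at ihv
      set k := Kf m - (j+1) with hk
      have hd : ∀ i ∈ Asf m k, ⟪μ, G.d i⟫ = 0 := by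
        refine keystep (Asf m k) (hsub m k hkK) (u (k+1)) (huC (k+1) (by omega)) ?_ ihv
        intro i hi
        rw [hustep k]
        exact (hadm m k hkK (u k)).1 i hi
      have h0 : ⟪μ, u (k+1) - u k⟫ = 0 := by
        apply G.D_inner_eq_zero hd
        rw [hustep k]
        exact (hadm m k hkK (u k)).2
      rw [inner_sub_right] at h0
      show σ - ε₀ ≤ ⟪μ, u k⟫
      linarith
  have hdall : ∀ i ∈ A, ⟪μ, G.d i⟫ = 0 := by
    intro i hi
    obtain ⟨k, hkK, hik⟩ := hcov m i hi
    have hb := descend (Kf m - (k+1)) (by omega)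
    have heq : Kf m - (Kf m - (k+1)) = k + 1 := by omega
    rw [heq] at hb
    refine keystep (Asf m k) (hsub m k hkK) (u (k+1)) (huC (k+1) (by omega)) ?_ hb i hik
    intro i' hi'
    rw [hustep k]
    exact (hadm m k hkK (u k)).1 i' hi'
  have hμbot : μ ∈ (G.H A ⊔ G.D A)ᗮ := by
    rw [Submodule.mem_orthogonal]
    intro x hx
    obtain ⟨y, hy, z, hz, rfl⟩ := Submodule.mem_sup.1 hx
    have hyz : ⟪y + z, μ⟫ = ⟪μ, y⟫ + ⟪μ, z⟫ := by
      rw [real_inner_comm, inner_add_right]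
    rw [hyz, hμH y hy, G.D_inner_eq_zero hdall hz, add_zero]
  rw [hgood, Submodule.top_orthogonal_eq_bot] at hμbot
  exact hμne ((Submodule.mem_bot ℝ).1 hμbot)

lemma dual_nhds : dualSet G.B ∈ 𝓝 (0 : EucSp J) := by
  have hball : Metric.ball (0 : EucSp J) (G.R + 1)⁻¹ ⊆ dualSet G.B := by
    intro y hy
    intro z hz
    have hyn : ‖y‖ < (G.R + 1)⁻¹ := by
      simpa [Metric.mem_ball, dist_eq_norm] using hy
    have hzn : ‖z‖ ≤ G.R := by
      simpa [Metric.mem_closedBall, dist_eq_norm] using G.hRB hz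
    have hR1 : (0:ℝ) < G.R + 1 := by linarith [G.R_nonneg]
    calc ⟪y, z⟫ ≤ ‖y‖ * ‖z‖ := real_inner_le_norm _ _
      _ ≤ (G.R + 1)⁻¹ * (G.R + 1) :=
          mul_le_mul hyn.le (by linarith) (norm_nonneg _) (by positivity)
      _ = 1 := by field_simp
  exact Filter.mem_of_superset (Metric.ball_mem_nhds 0 (by have := G.R_nonneg; positivity)) hball

lemma dual_absorbent : Absorbent ℝ (dualSet G.B) := absorbent_nhds_zero G.dual_nhds

lemma pair_le_gD {y z : EucSp J} (hz : z ∈ G.B) : ⟪y, z⟫ ≤ gauge (dualSet G.B) y := by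
  by_contra hlt
  push_neg at hlt
  obtain ⟨b, hb0, hba, hyb⟩ := exists_lt_of_gauge_lt G.dual_absorbent hlt
  rw [Set.mem_smul_set_iff_inv_smul_mem₀ hb0.ne'] at hyb
  have h1 : ⟪b⁻¹ • y, z⟫ ≤ 1 := hyb z hz
  rw [real_inner_smul_left] at h1
  have h3 := mul_le_mul_of_nonneg_left h1 hb0.le
  rw [mul_one, ← mul_assoc, mul_inv_cancel₀ hb0.ne', one_mul] at h3
  linarith

lemma norm_le_gD (v : EucSp J) : G.ρ * ‖v‖ ≤ gauge (dualSet G.B) v := by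
  rcases eq_or_ne v 0 with rfl | hv
  · simp [gauge_zero]
  · have hvn : 0 < ‖v‖ := norm_pos_iff.2 hv
    have hz : (G.ρ * ‖v‖⁻¹) • v ∈ G.B := by
      apply G.hρB
      have hns : ‖(G.ρ * ‖v‖⁻¹) • v‖ = G.ρ := by
        rw [norm_smul, Real.norm_eq_abs, abs_of_pos (mul_pos G.hρ (inv_pos.2 hvn))]
        field_simp
      simp [Metric.mem_closedBall, dist_eq_norm, hns]
    have hp := G.pair_le_gD (y := v) hz
    rw [real_inner_smul_right, real_inner_self_eq_norm_mul_norm] at hp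
    calc G.ρ * ‖v‖ = G.ρ * ‖v‖⁻¹ * (‖v‖ * ‖v‖) := by field_simp
      _ ≤ _ := hp

lemma gD_le_of_forall {v : EucSp J} {M : ℝ} (hM : 0 ≤ M)
    (h : ∀ z ∈ G.B, ⟪v, z⟫ ≤ M) : gauge (dualSet G.B) v ≤ M := by
  rcases eq_or_lt_of_le hM with hM0 | hM0
  · have hv : v = 0 := by
      by_contra hv0
      have hvn : 0 < ‖v‖ := norm_pos_iff.2 hv0
      have hz : (G.ρ * ‖v‖⁻¹) • v ∈ G.B := by
        apply G.hρB
        have hns : ‖(G.ρ * ‖v‖⁻¹) • v‖ = G.ρ := by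
          rw [norm_smul, Real.norm_eq_abs, abs_of_pos (mul_pos G.hρ (inv_pos.2 hvn))]
          field_simp
        simp [Metric.mem_closedBall, dist_eq_norm, hns]
      have h1 := h _ hz
      rw [real_inner_smul_right, real_inner_self_eq_norm_mul_norm, ← hM0] at h1
      have h2 : G.ρ * ‖v‖⁻¹ * (‖v‖ * ‖v‖) = G.ρ * ‖v‖ := by field_simp
      rw [h2] at h1
      nlinarith [G.hρ]
    rw [hv, gauge_zero]
    exact hM
  · apply gauge_le_of_mem hM
    rw [Set.mem_smul_set_iff_inv_smul_mem₀ hM0.ne']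
    intro z hz
    rw [real_inner_smul_left]
    calc M⁻¹ * ⟪v, z⟫ ≤ M⁻¹ * M :=
        mul_le_mul_of_nonneg_left (h z hz) (by positivity)
      _ = 1 := inv_mul_cancel₀ hM0.ne'

lemma pairC {A : Set (Fin N)} {y : EucSp J} (hy : ∀ h ∈ G.H A, ⟪y, h⟫ = 0)
    (w : EucSp J) : ⟪y, w⟫ ≤ gauge (G.C A) w * gauge (dualSet G.B) y := by
  have key : ∀ a : ℝ, gauge (G.C A) w < a → ⟪y, w⟫ ≤ a * gauge (dualSet G.B) y := by
    intro a ha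
    obtain ⟨b, hb0, hba, hwb⟩ := exists_lt_of_gauge_lt (G.C_absorbent A) ha
    rw [Set.mem_smul_set_iff_inv_smul_mem₀ hb0.ne'] at hwb
    obtain ⟨p, hp, h, hh, hph⟩ := (G.mem_C_iff).1 hwb
    have h1 : ⟪y, b⁻¹ • w⟫ = ⟪y, p⟫ := by
      rw [← hph, inner_add_right, hy h hh, add_zero]
    have h2 : ⟪y, p⟫ ≤ gauge (dualSet G.B) y := G.pair_le_gD hp
    have h3 : ⟪y, w⟫ = b * ⟪y, b⁻¹ • w⟫ := by
      rw [real_inner_smul_right, ← mul_assoc, mul_inv_cancel₀ hb0.ne', one_mul]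
    rw [h3, h1]
    calc b * ⟪y, p⟫ ≤ b * gauge (dualSet G.B) y := mul_le_mul_of_nonneg_left h2 hb0.le
      _ ≤ a * gauge (dualSet G.B) y :=
          mul_le_mul_of_nonneg_right hba.le (gauge_nonneg _)
  by_contra hlt
  push_neg at hlt
  rcases eq_or_lt_of_le (gauge_nonneg (s := dualSet G.B) y) with hg0 | hg0
  · have h1 := key (gauge (G.C A) w + 1) (by linarith)
    rw [← hg0, mul_zero] at h1 hlt
    linarith
  · set gC := gauge (G.C A) w with hgC
    set gD := gauge (dualSet G.B) y with hgD
    have ha : gC < (gC + ⟪y, w⟫ / gD) / 2 := by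
      have h2 : gC < ⟪y, w⟫ / gD := by
        rw [lt_div_iff₀ hg0]
        exact hlt
      linarith
    have h1 := key _ ha
    have hmul : ((gC + ⟪y, w⟫ / gD) / 2) * gD = (gC * gD + ⟪y, w⟫) / 2 := by
      field_simp
    rw [hmul] at h1
    linarith

lemma dual_step (hn1 : ∀ i, ‖G.n i‖ = 1) {A A' : Set (Fin N)} (hA' : A' ⊆ A)
    {L : EucSp J →ₗ[ℝ] EucSp J}
    (hL : ∀ y, L y ∈ G.H A' ∧ L y - y ∈ G.D A') {y : EucSp J}
    (hy : ∀ h ∈ G.H A, ⟪y, h⟫ = 0) :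
    (∀ h ∈ G.H A, ⟪LinearMap.adjoint L y, h⟫ = 0) ∧
      gauge (dualSet G.B) (LinearMap.adjoint L y) ≤ gauge (dualSet G.B) y := by
  constructor
  · intro h hh
    rw [LinearMap.adjoint_inner_left, G.adm_id hn1 hL (G.H_mono hA' hh)]
    exact hy h hh
  · apply G.gD_le_of_forall (gauge_nonneg _)
    intro z hz
    rw [LinearMap.adjoint_inner_left]
    have h1 := G.pairC hy (L z)
    have h2 : gauge (G.C A) (L z) ≤ 1 :=
      gauge_le_one_of_mem (G.stepC hn1 hA' hL z (G.B_subset_C hz))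
    calc ⟪y, L z⟫ ≤ gauge (G.C A) (L z) * gauge (dualSet G.B) y := h1
      _ ≤ 1 * gauge (dualSet G.B) y :=
          mul_le_mul_of_nonneg_right h2 (gauge_nonneg _)
      _ = gauge (dualSet G.B) y := one_mul _

end GeoData

lemma frontComp_pair {J : ℕ} (Ls : ℕ → EucSp J →ₗ[ℝ] EucSp J) :
    ∀ (K : ℕ) (y z : EucSp J),
      ⟪frontComp (fun k x => LinearMap.adjoint (Ls k) x) K y, z⟫ =
        ⟪y, backComp (fun k x => Ls k x) K z⟫ := by
  intro K
  induction K with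
  | zero => intro y z; rfl
  | succ K ih =>
    intro y z
    have h1 : frontComp (fun k x => LinearMap.adjoint (Ls k) x) (K+1) y
        = frontComp (fun k x => LinearMap.adjoint (Ls k) x) K
          (LinearMap.adjoint (Ls K) y) := rfl
    rw [h1, ih]
    have h2 : backComp (fun k x => Ls k x) (K+1) z
        = Ls K (backComp (fun k x => Ls k x) K z) := rfl
    rw [h2, LinearMap.adjoint_inner_left]

lemma frontComp_split {J : ℕ} (F : ℕ → EucSp J → EucSp J) (ℓ : ℕ) :
    ∀ (t : ℕ) (y : EucSp J),
      frontComp F (ℓ + t) y = frontComp F ℓ (frontComp (fun k => F (ℓ + k)) t y) := by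
  intro t
  induction t with
  | zero => intro y; rfl
  | succ t ih =>
    intro y
    have h1 : frontComp F (ℓ + (t+1)) y = frontComp F (ℓ + t) (F (ℓ + t) y) := rfl
    rw [h1, ih]
    rfl


lemma frontComp_split' {J : ℕ} (Ls : ℕ → EucSp J →ₗ[ℝ] EucSp J) (ℓ t : ℕ) (y : EucSp J) :
    frontComp (fun k x => LinearMap.adjoint (Ls k) x) (ℓ + t) y =
      frontComp (fun k x => LinearMap.adjoint (Ls k) x) ℓ
        (frontComp (fun k x => LinearMap.adjoint (Ls (ℓ + k)) x) t y) :=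
  frontComp_split _ ℓ t y

end Statement16Aux

/-- **Lemma (uniform contraction for products of adjoint projection operators).**
Fix `δ > 0` and a set `B` as in Assumption (B).  There is `δ' ∈ [0,1)` such that for every
`x ∈ ∂G \ W*` and finite sequence `x₁,…,x_K ∈ ∂G \ W*` covering `I(x)`, the product
`L_{x₁}* ⋯ L_{x_K}*` contracts the `B*`-gauge by `δ'` on `H_x^⊥`; consequently, for infinite
sequences covering `I(x)` along every tail, `L_{x₁}* ⋯ L_{x_K}* y → 0` on `H_x^⊥`.
(`xs k`, `Ls k` correspond to `x_{k+1}`, `L_{x_{k+1}}`.) -/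
theorem statement16 (J N : ℕ) (hJ : 1 ≤ J) (hN : 1 ≤ N)
    (n d : Fin N → EucSp J) (c : Fin N → ℝ)
    (hn : ∀ i, ‖n i‖ = 1) (hdn : ∀ i, ⟪d i, n i⟫ = 1)
    (hGne : (Gset n c).Nonempty)
    (δ : ℝ) (hδ : 0 < δ) (B : Set (EucSp J))
    (hBcompact : IsCompact B) (hBconvex : Convex ℝ B) (hBsymm : ∀ z ∈ B, -z ∈ B)
    (hB0 : (0 : EucSp J) ∈ interior B)
    (hBgeom : ∀ i : Fin N, ∀ z ∈ frontier B, |⟪z, n i⟫| < δ →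
      ∀ ν : EucSp J, ‖ν‖ = 1 → (∀ y ∈ B, 0 ≤ ⟪ν, y - z⟫) → ⟪ν, d i⟫ = 0) :
    ∃ δ' : ℝ, 0 ≤ δ' ∧ δ' < 1 ∧
      (∀ x ∈ frontier (Gset n c), x ∉ Wstar n c d →
        ∀ (K : ℕ) (xs : ℕ → EucSp J),
          (∀ k < K, xs k ∈ frontier (Gset n c) ∧ xs k ∉ Wstar n c d) →
          ISet n c x = ⋃ (k : ℕ) (_ : k < K), ISet n c (xs k) →
          ∀ Ls : ℕ → (EucSp J →ₗ[ℝ] EucSp J),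
            (∀ k < K, ∀ y : EucSp J, Ls k y ∈ Hset n c (xs k) ∧
              Ls k y - y ∈ Submodule.span ℝ (dCone n c d (xs k))) →
            ∀ y ∈ (Submodule.span ℝ (Hset n c x))ᗮ,
              gauge (dualSet B)
                  (frontComp (fun k z => LinearMap.adjoint (Ls k) z) K y) ≤
                δ' * gauge (dualSet B) y) ∧
      (∀ x ∈ frontier (Gset n c), x ∉ Wstar n c d →
        ∀ xs : ℕ → EucSp J,
          (∀ k, xs k ∈ frontier (Gset n c) ∧ xs k ∉ Wstar n c d) →
          (∀ ℓ : ℕ, ISet n c x = ⋃ (k : ℕ) (_ : ℓ ≤ k), ISet n c (xs k)) →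
          ∀ Ls : ℕ → (EucSp J →ₗ[ℝ] EucSp J),
            (∀ k, ∀ y : EucSp J, Ls k y ∈ Hset n c (xs k) ∧
              Ls k y - y ∈ Submodule.span ℝ (dCone n c d (xs k))) →
            ∀ y ∈ (Submodule.span ℝ (Hset n c x))ᗮ,
              Tendsto (fun K => frontComp (fun k z => LinearMap.adjoint (Ls k) z) K y)
                atTop (𝓝 0)) := by
  classical
  obtain ⟨ε, hεpos, hεball⟩ : ∃ ε > 0, Metric.ball (0 : EucSp J) ε ⊆ B := by
    obtain ⟨t, hts, hto, h0t⟩ := mem_interior.1 hB0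
    obtain ⟨ε, hε, hball⟩ := Metric.isOpen_iff.1 hto 0 h0t
    exact ⟨ε, hε, hball.trans hts⟩
  obtain ⟨R, hRB⟩ := hBcompact.isBounded.subset_closedBall 0
  set G : GeoData J N := ⟨n, d, δ, B, ε/2, R, hδ, hBcompact, hBconvex, half_pos hεpos,
    (Metric.closedBall_subset_ball (by linarith)).trans hεball, hRB, hBgeom⟩ with hG
  have hn1 : ∀ i, ‖G.n i‖ = 1 := hn
  have hHset : ∀ x : EucSp J, Submodule.span ℝ (Hset n c x) = G.H (ISet n c x) := by
    intro x
    have h : Hset n c x = ↑(G.H (ISet n c x)) := rfl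
    rw [h, Submodule.span_eq]
  have hDspan : ∀ x : EucSp J, Submodule.span ℝ (dCone n c d x) = G.D (ISet n c x) := by
    intro x
    apply le_antisymm
    · rw [Submodule.span_le]
      rintro w ⟨k, r, v, hr, hv, rfl⟩
      apply Submodule.sum_mem
      intro i _
      exact Submodule.smul_mem _ _ (Submodule.subset_span (hv i))
    · apply Submodule.span_mono
      intro w hw
      exact ⟨1, fun _ => 1, fun _ => w, fun _ => zero_le_one, fun _ => hw, by simp⟩
  have hgood : ∀ x ∈ frontier (Gset n c), x ∉ Wstar n c d →
      G.H (ISet n c x) ⊔ G.D (ISet n c x) = ⊤ := by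
    intro x hx hW
    by_cases hN2 : 2 ≤ (ISet n c x).ncard
    · have hNst : x ∈ Nstar n c := ⟨hx, hN2⟩
      have hspan : Submodule.span ℝ (Hset n c x ∪ dCone n c d x) = ⊤ := by
        by_contra hne
        exact hW ⟨hNst, hne⟩
      rw [Submodule.span_union, hHset x, hDspan x] at hspan
      exact hspan
    · push_neg at hN2
      rcases (by omega : (ISet n c x).ncard = 0 ∨ (ISet n c x).ncard = 1) with h0 | h1
      · have hempty : ISet n c x = ∅ := (Set.ncard_eq_zero (Set.toFinite _)).1 h0
        rw [eq_top_iff]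
        intro v _
        apply Submodule.mem_sup_left
        show ∀ i ∈ ISet n c x, ⟪v, n i⟫ = 0
        intro i hi
        rw [hempty] at hi
        exact absurd hi (Set.notMem_empty i)
      · obtain ⟨i, hi⟩ := Set.ncard_eq_one.1 h1
        rw [eq_top_iff]
        intro v _
        apply Submodule.mem_sup.2
        refine ⟨v - ⟪v, n i⟫ • d i, ?_, ⟪v, n i⟫ • d i, ?_, by abel⟩
        · show ∀ j ∈ ISet n c x, ⟪v - ⟪v, n i⟫ • d i, n j⟫ = 0
          intro j hj
          rw [hi] at hj
          have hji : j = i := hj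
          subst hji
          rw [inner_sub_left, real_inner_smul_left, hdn j, mul_one, sub_self]
        · apply Submodule.smul_mem
          apply Submodule.subset_span
          rw [hi]
          exact ⟨i, rfl, rfl⟩
  have hβex : ∀ F : Finset (Fin N), ∃ β : ℝ, 0 ≤ β ∧ β < 1 ∧
      ((G.H (↑F) ⊔ G.D (↑F) = ⊤) → ∀ (K : ℕ) (As : ℕ → Set (Fin N))
        (Ls : ℕ → EucSp J →ₗ[ℝ] EucSp J),
        (∀ k < K, As k ⊆ (↑F : Set (Fin N))) →
        (∀ k < K, ∀ y, Ls k y ∈ G.H (As k) ∧ Ls k y - y ∈ G.D (As k)) →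
        (∀ i ∈ (↑F : Set (Fin N)), ∃ k, k < K ∧ i ∈ As k) →
        ∀ v ∈ G.C ↑F, gauge (G.C ↑F) (backComp (fun k x => Ls k x) K v) ≤ β) := by
    intro F
    by_cases hg : G.H (↑F) ⊔ G.D (↑F) = ⊤
    · obtain ⟨β, hb0, hb1, hb2⟩ := G.contractC hn1 ↑F hg
      exact ⟨β, hb0, hb1, fun _ => hb2⟩
    · exact ⟨0, le_refl _, zero_lt_one, fun hg' => absurd hg' hg⟩
  choose βf hβ0 hβ1 hβP using hβex
  have huniv : (Finset.univ : Finset (Finset (Fin N))).Nonempty := Finset.univ_nonempty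
  set δ'v : ℝ := Finset.univ.sup' huniv βf with hδ'def
  have hδ'0 : 0 ≤ δ'v := le_trans (hβ0 ∅) (Finset.le_sup' βf (Finset.mem_univ ∅))
  have hδ'1 : δ'v < 1 := (Finset.sup'_lt_iff huniv).2 fun F _ => hβ1 F
  refine ⟨δ'v, hδ'0, hδ'1, ?_, ?_⟩
  · -- first bullet: finite covering products contract
    intro x hx hW K xs hxs hcov Ls hLs y hy
    have hgx := hgood x hx hW
    set A := ISet n c x with hA
    set F := (Set.toFinite A).toFinset with hF
    have hFAeq : (↑F : Set (Fin N)) = A := Set.Finite.coe_toFinset _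
    have hcontr := hβP F (by rw [hFAeq]; exact hgx)
    rw [hFAeq] at hcontr
    have hyperp : ∀ h ∈ G.H A, ⟪y, h⟫ = 0 := by
      intro h hh
      have h1 : h ∈ Submodule.span ℝ (Hset n c x) := by rw [hHset x]; exact hh
      have h2 := (Submodule.mem_orthogonal _ y).1 hy h h1
      rw [real_inner_comm]
      exact h2
    have hsub : ∀ k < K, ISet n c (xs k) ⊆ A := by
      intro k hk i hi
      rw [hcov]
      exact Set.mem_iUnion.2 ⟨k, Set.mem_iUnion.2 ⟨hk, hi⟩⟩
    have hcov' : ∀ i ∈ A, ∃ k, k < K ∧ i ∈ ISet n c (xs k) := by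
      intro i hi
      rw [hcov] at hi
      simp only [Set.mem_iUnion] at hi
      obtain ⟨k, hk, hik⟩ := hi
      exact ⟨k, hk, hik⟩
    have hadm' : ∀ k < K, ∀ z, Ls k z ∈ G.H (ISet n c (xs k)) ∧
        Ls k z - z ∈ G.D (ISet n c (xs k)) := by
      intro k hk z
      obtain ⟨h1, h2⟩ := hLs k hk z
      refine ⟨h1, ?_⟩
      rw [← hDspan (xs k)]
      exact h2
    have hM : 0 ≤ δ'v * gauge (dualSet G.B) y := mul_nonneg hδ'0 (gauge_nonneg _)
    have hfinal : gauge (dualSet G.B)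
        (frontComp (fun k z => LinearMap.adjoint (Ls k) z) K y)
        ≤ δ'v * gauge (dualSet G.B) y := by
      apply G.gD_le_of_forall hM
      intro z hz
      rw [frontComp_pair Ls K y z]
      have h1 := G.pairC hyperp (backComp (fun k x => Ls k x) K z)
      have h2 : gauge (G.C A) (backComp (fun k x => Ls k x) K z) ≤ βf F :=
        hcontr K _ _ hsub hadm' hcov' z (G.B_subset_C hz)
      have h3 : βf F ≤ δ'v := Finset.le_sup' βf (Finset.mem_univ F)
      calc ⟪y, backComp (fun k x => Ls k x) K z⟫
          ≤ gauge (G.C A) (backComp (fun k x => Ls k x) K z) * gauge (dualSet G.B) y := h1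
        _ ≤ δ'v * gauge (dualSet G.B) y :=
            mul_le_mul_of_nonneg_right (h2.trans h3) (gauge_nonneg _)
    exact hfinal
  · -- second bullet: convergence to zero along infinite tail-covering sequences
    intro x hx hW xs hxs hcov Ls hLs y hy
    have hgx := hgood x hx hW
    set A := ISet n c x with hA
    set F := (Set.toFinite A).toFinset with hF
    have hFAeq : (↑F : Set (Fin N)) = A := Set.Finite.coe_toFinset _
    have hcontr := hβP F (by rw [hFAeq]; exact hgx)
    rw [hFAeq] at hcontr
    have hyperp : ∀ h ∈ G.H A, ⟪y, h⟫ = 0 := by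
      intro h hh
      have h1 : h ∈ Submodule.span ℝ (Hset n c x) := by rw [hHset x]; exact hh
      have h2 := (Submodule.mem_orthogonal _ y).1 hy h h1
      rw [real_inner_comm]
      exact h2
    have hsub : ∀ k : ℕ, ISet n c (xs k) ⊆ A := by
      intro k i hi
      rw [hcov 0]
      exact Set.mem_iUnion.2 ⟨k, Set.mem_iUnion.2 ⟨Nat.zero_le k, hi⟩⟩
    have hadm' : ∀ k : ℕ, ∀ z, Ls k z ∈ G.H (ISet n c (xs k)) ∧
        Ls k z - z ∈ G.D (ISet n c (xs k)) := by
      intro k z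
      obtain ⟨h1, h2⟩ := hLs k z
      refine ⟨h1, ?_⟩
      rw [← hDspan (xs k)]
      exact h2
    have hex : ∀ ℓ : ℕ, ∃ m : ℕ, ℓ < m ∧
        ∀ i ∈ A, ∃ k, ℓ ≤ k ∧ k < m ∧ i ∈ ISet n c (xs k) := by
      intro ℓ
      have hchoice : ∀ i : Fin N, i ∈ A → ∃ k, ℓ ≤ k ∧ i ∈ ISet n c (xs k) := by
        intro i hi
        have hi' : i ∈ ⋃ (k : ℕ) (_ : ℓ ≤ k), ISet n c (xs k) := by
          rw [← hcov ℓ]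
          exact hi
        simp only [Set.mem_iUnion] at hi'
        obtain ⟨k, hk, hik⟩ := hi'
        exact ⟨k, hk, hik⟩
      set g : Fin N → ℕ := fun i => if h : i ∈ A then (hchoice i h).choose else ℓ with hg
      refine ⟨Finset.univ.sup g + ℓ + 1, by omega, ?_⟩
      intro i hi
      have hgi : g i = (hchoice i hi).choose := by rw [hg]; exact dif_pos hi
      have hspec := (hchoice i hi).choose_spec
      refine ⟨g i, by rw [hgi]; exact hspec.1, ?_, by rw [hgi]; exact hspec.2⟩
      have hle := Finset.le_sup (f := g) (Finset.mem_univ i)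
      omega
    choose nxt hnxt1 hnxt2 using hex
    set ℓseq : ℕ → ℕ := fun j => Nat.rec 0 (fun _ prev => nxt prev) j with hℓ
    have hℓS : ∀ j, ℓseq (j+1) = nxt (ℓseq j) := fun j => rfl
    have htail : ∀ (ℓ t : ℕ) (v : EucSp J), (∀ h ∈ G.H A, ⟪v, h⟫ = 0) →
        (∀ h ∈ G.H A,
          ⟪frontComp (fun k x => LinearMap.adjoint (Ls (ℓ + k)) x) t v, h⟫ = 0) ∧
          gauge (dualSet G.B) (frontComp (fun k x => LinearMap.adjoint (Ls (ℓ + k)) x) t v)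
            ≤ gauge (dualSet G.B) v := by
      intro ℓ t
      induction t with
      | zero => intro v hv; exact ⟨hv, le_refl _⟩
      | succ t ih =>
        intro v hv
        have h1 := G.dual_step hn1 (hsub (ℓ + t)) (hadm' (ℓ + t)) hv
        have h2 := ih _ h1.1
        exact ⟨h2.1, h2.2.trans h1.2⟩
    have hblock : ∀ (ℓ : ℕ) (v : EucSp J), (∀ h ∈ G.H A, ⟪v, h⟫ = 0) →
        gauge (dualSet G.B) (frontComp (fun k x => LinearMap.adjoint (Ls (ℓ + k)) x)
            (nxt ℓ - ℓ) v) ≤ βf F * gauge (dualSet G.B) v := by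
      intro ℓ v hv
      apply G.gD_le_of_forall (mul_nonneg (hβ0 F) (gauge_nonneg _))
      intro z hz
      rw [frontComp_pair (fun k => Ls (ℓ + k)) (nxt ℓ - ℓ) v z]
      have h1 := G.pairC hv (backComp (fun k x => Ls (ℓ + k) x) (nxt ℓ - ℓ) z)
      have h2 : gauge (G.C A) (backComp (fun k x => Ls (ℓ + k) x) (nxt ℓ - ℓ) z) ≤ βf F := by
        apply hcontr (nxt ℓ - ℓ) (fun k => ISet n c (xs (ℓ + k))) (fun k => Ls (ℓ + k))
          (fun k _ => hsub (ℓ + k)) (fun k _ => hadm' (ℓ + k)) ?_ z (G.B_subset_C hz)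
        intro i hi
        obtain ⟨k, hk1, hk2, hik⟩ := hnxt2 ℓ i hi
        refine ⟨k - ℓ, by omega, ?_⟩
        show i ∈ ISet n c (xs (ℓ + (k - ℓ)))
        rw [show ℓ + (k - ℓ) = k from by omega]
        exact hik
      calc ⟪v, backComp (fun k x => Ls (ℓ + k) x) (nxt ℓ - ℓ) z⟫
          ≤ gauge (G.C A) (backComp (fun k x => Ls (ℓ + k) x) (nxt ℓ - ℓ) z) *
            gauge (dualSet G.B) v := h1
        _ ≤ βf F * gauge (dualSet G.B) v :=
            mul_le_mul_of_nonneg_right h2 (gauge_nonneg _)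
    have hmain : ∀ j : ℕ, ∀ v : EucSp J, (∀ h ∈ G.H A, ⟪v, h⟫ = 0) → ∀ K : ℕ, ℓseq j ≤ K →
        gauge (dualSet G.B) (frontComp (fun k x => LinearMap.adjoint (Ls k) x) K v)
          ≤ (βf F)^j * gauge (dualSet G.B) v := by
      intro j
      induction j with
      | zero =>
        intro v hv K _
        rw [pow_zero, one_mul]
        have h := (htail 0 K v hv).2
        simpa using h
      | succ j ih =>
        intro v hv K hK
        have hjj : ℓseq j < ℓseq (j+1) := by rw [hℓS j]; exact hnxt1 _
        have hLK : ℓseq (j+1) ≤ K := hK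
        have hsplit1 := frontComp_split' Ls (ℓseq (j+1)) (K - ℓseq (j+1)) v
        rw [show ℓseq (j+1) + (K - ℓseq (j+1)) = K from by omega] at hsplit1
        rw [hsplit1]
        have hw1p := htail (ℓseq (j+1)) (K - ℓseq (j+1)) v hv
        set w1 := frontComp (fun k x => LinearMap.adjoint (Ls (ℓseq (j+1) + k)) x)
          (K - ℓseq (j+1)) v with hw1
        have hsplit2 := frontComp_split' Ls (ℓseq j) (ℓseq (j+1) - ℓseq j) w1
        rw [show ℓseq j + (ℓseq (j+1) - ℓseq j) = ℓseq (j+1) from by omega] at hsplit2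
        rw [hsplit2]
        have hw2perp := (htail (ℓseq j) (ℓseq (j+1) - ℓseq j) w1 hw1p.1).1
        have hw2g : gauge (dualSet G.B)
            (frontComp (fun k x => LinearMap.adjoint (Ls (ℓseq j + k)) x)
              (ℓseq (j+1) - ℓseq j) w1) ≤ βf F * gauge (dualSet G.B) w1 := by
          rw [show ℓseq (j+1) - ℓseq j = nxt (ℓseq j) - ℓseq j from by rw [hℓS j]]
          exact hblock (ℓseq j) w1 hw1p.1
        have houter := ih (frontComp (fun k x => LinearMap.adjoint (Ls (ℓseq j + k)) x)
          (ℓseq (j+1) - ℓseq j) w1) hw2perp (ℓseq j) le_rfl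
        calc gauge (dualSet G.B) (frontComp (fun k x => LinearMap.adjoint (Ls k) x)
              (ℓseq j) (frontComp (fun k x => LinearMap.adjoint (Ls (ℓseq j + k)) x)
                (ℓseq (j+1) - ℓseq j) w1))
            ≤ (βf F)^j * gauge (dualSet G.B)
                (frontComp (fun k x => LinearMap.adjoint (Ls (ℓseq j + k)) x)
                  (ℓseq (j+1) - ℓseq j) w1) := houter
          _ ≤ (βf F)^j * (βf F * gauge (dualSet G.B) w1) :=
              mul_le_mul_of_nonneg_left hw2g (pow_nonneg (hβ0 F) j)
          _ ≤ (βf F)^j * (βf F * gauge (dualSet G.B) v) := by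
              have hstep := mul_le_mul_of_nonneg_left hw1p.2 (hβ0 F)
              exact mul_le_mul_of_nonneg_left hstep (pow_nonneg (hβ0 F) j)
          _ = (βf F)^(j+1) * gauge (dualSet G.B) v := by ring
    have hpow : Filter.Tendsto (fun j : ℕ => (βf F)^j * gauge (dualSet G.B) y)
        Filter.atTop (𝓝 0) := by
      have h0 := tendsto_pow_atTop_nhds_zero_of_lt_one (hβ0 F) (hβ1 F)
      have h1 := h0.mul_const (gauge (dualSet G.B) y)
      simpa using h1
    rw [Metric.tendsto_atTop]
    intro ε' hε'
    have hρε : 0 < G.ρ * ε' := mul_pos G.hρ hε'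
    obtain ⟨j, hj⟩ := Metric.tendsto_atTop.1 hpow (G.ρ * ε') hρε
    refine ⟨ℓseq j, fun K hK => ?_⟩
    have h1 := hmain j y hyperp K hK
    have h2 := G.norm_le_gD (frontComp (fun k x => LinearMap.adjoint (Ls k) x) K y)
    have h3 := hj j le_rfl
    rw [Real.dist_eq, sub_zero,
      abs_of_nonneg (mul_nonneg (pow_nonneg (hβ0 F) j) (gauge_nonneg _))] at h3
    rw [dist_eq_norm, sub_zero]
    have h4 : G.ρ * ‖frontComp (fun k z => LinearMap.adjoint (Ls k) z) K y‖
        < G.ρ * ε' := by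
      calc G.ρ * ‖frontComp (fun k z => LinearMap.adjoint (Ls k) z) K y‖
          ≤ gauge (dualSet G.B)
            (frontComp (fun k x => LinearMap.adjoint (Ls k) x) K y) := h2
        _ ≤ (βf F)^j * gauge (dualSet G.B) y := h1
        _ < G.ρ * ε' := h3
    exact lt_of_mul_lt_mul_left h4 G.hρ.le
end
end

section
/- Let X : [0,∞) → ℝ be continuous with X(0) ≥ 0, and set Z(t) = Γ₁(X)(t) and Y(t) = max(sup_{s∈[0,t]}(−X(s)), 0). Then for every continuous ψ : [0,∞) → ℝ: (1) ∇_ψΓ₁(X)(t) exists for every t ≥ 0 and the resulting function lies in D_{ℓ,r}; (2) ∇_ψΓ₁(X)(0) = ψ(0) if X(0) > 0 and ∇_ψΓ₁(X)(0) = max(ψ(0),0) if X(0) = 0; and if ∇_ψΓ₁(X) is discontinuous at some t > 0, then Z(t) = 0 and ∇_ψΓ₁(X) is left continuous at t if and only if ∇_ψΓ₁(X)(t−) ≥ 0; (3) if in addition for every t ≥ 0 with Z(t) = 0 and all s < t < u, Y is nonconstant on (max(s,0), u), then there exists a unique solution (φ,η) of the one-dimensional DP associated with Z for ψ, and φ(t)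 = ∇_ψΓ₁(X)(t+) for all t ≥ 0. -/
open Filter Topology Set

set_option linter.unusedSectionVars false
set_option maxHeartbeats 1000000

noncomputable section

/-- The one-dimensional Skorokhod map:
`Γ₁(f)(t) = f(t) + max(sup_{s ∈ [0,t]} (−f(s)), 0)`. -/
def SM1 (f : ℝ → ℝ) (t : ℝ) : ℝ :=
  f t + max (sSup ((fun s => -f s) '' Icc 0 t)) 0

/-- `f` is right-continuous on `[0,∞)` with finite left limits on `(0,∞)`. -/
def Dr1 (f : ℝ → ℝ) : Prop :=
  (∀ t : ℝ, 0 ≤ t → Tendsto f (𝓝[>] t) (𝓝 (f t))) ∧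
  (∀ t : ℝ, 0 < t → ∃ L, Tendsto f (𝓝[<] t) (𝓝 L))

/-- `f ∈ D_{ℓ,r}`: finite left limits on `(0,∞)`, finite right limits on `[0,∞)`, and at each
`t > 0`, `f` is left continuous or right continuous. -/
def Dlr1 (f : ℝ → ℝ) : Prop :=
  (∀ t : ℝ, 0 < t → ∃ L, Tendsto f (𝓝[<] t) (𝓝 L)) ∧
  (∀ t : ℝ, 0 ≤ t → ∃ L, Tendsto f (𝓝[>] t) (𝓝 L)) ∧
  (∀ t : ℝ, 0 < t →
    Tendsto f (𝓝[<] t) (𝓝 (f t)) ∨ Tendsto f (𝓝[>] t) (𝓝 (f t)))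

/-- `(φ, η)` solves the one-dimensional derivative problem associated with `Z` for `ψ`. -/
def SolvesDP1 (Z ψ φ η : ℝ → ℝ) : Prop :=
  Dr1 φ ∧ Dr1 η ∧
  (∀ t : ℝ, 0 ≤ t → φ t = ψ t + η t) ∧
  (∀ t : ℝ, 0 ≤ t → Z t = 0 → φ t = 0) ∧
  (0 < Z 0 → η 0 = 0) ∧
  (∀ s t : ℝ, 0 ≤ s → s < t → (∀ u ∈ Ioc s t, 0 < Z u) → η t = η s)

namespace S19

variable (X ψ : ℝ → ℝ)

/-- running max of `-X` -/
def Mf (t : ℝ) : ℝ := sSup ((fun s => -X s) '' Icc 0 t)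

/-- argmax set -/
def Sf (t : ℝ) : Set ℝ := {s | s ∈ Icc 0 t ∧ -X s = Mf X t}

def If (t : ℝ) : ℝ := sInf (ψ '' Sf X t)

def Df (t : ℝ) : ℝ :=
  if 0 < Mf X t then -(If X ψ t) else if Mf X t = 0 then max (-(If X ψ t)) 0 else 0

def gf (t : ℝ) : ℝ := ψ t + Df X ψ t

def phif (X ψ : ℝ → ℝ) (u : ℝ) : ℝ := if SM1 X u = 0 then 0 else gf X ψ u

def etaf (X ψ : ℝ → ℝ) (u : ℝ) : ℝ := phif X ψ u - ψ u

variable {X ψ}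
variable (hX : Continuous X) (hψ : Continuous ψ)

section Basic
include hX

lemma bddAbove_img {t : ℝ} : BddAbove ((fun s => -X s) '' Icc 0 t) :=
  (isCompact_Icc.image_of_continuousOn (hX.neg.continuousOn)).bddAbove

lemma le_Mf {t s : ℝ} (hs : s ∈ Icc 0 t) : -X s ≤ Mf X t :=
  le_csSup (bddAbove_img hX) (mem_image_of_mem _ hs)

lemma Mf_le {t : ℝ} (ht : 0 ≤ t) {c : ℝ} (hc : ∀ s ∈ Icc 0 t, -X s ≤ c) :
    Mf X t ≤ c :=
  csSup_le ((nonempty_Icc.mpr ht).image _) (by rintro _ ⟨u, hu, rfl⟩; exact hc u hu)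

lemma exists_Sf {t : ℝ} (ht : 0 ≤ t) : ∃ s, s ∈ Sf X t := by
  obtain ⟨s, hs, hmax⟩ := isCompact_Icc.exists_isMaxOn (nonempty_Icc.mpr ht)
    (hX.neg.continuousOn)
  refine ⟨s, hs, le_antisymm (le_Mf hX hs) (Mf_le hX ht fun u hu => hmax hu)⟩

lemma Sf_subset {t : ℝ} : Sf X t ⊆ Icc 0 t := fun _ h => h.1

lemma isCompact_Sf {t : ℝ} : IsCompact (Sf X t) := by
  have : Sf X t = Icc 0 t ∩ (fun s => -X s) ⁻¹' {Mf X t} := by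
    ext s; simp [Sf, mem_inter_iff, and_comm]
  rw [this]
  exact isCompact_Icc.inter_right (isClosed_singleton.preimage hX.neg)

lemma Mf_mono {t u : ℝ} (ht : 0 ≤ t) (htu : t ≤ u) : Mf X t ≤ Mf X u :=
  csSup_le_csSup (bddAbove_img hX) ((nonempty_Icc.mpr ht).image _)
    (image_mono (Icc_subset_Icc le_rfl htu))

lemma Mf_split {t u : ℝ} (ht : 0 ≤ t) (htu : t ≤ u) :
    Mf X u = max (Mf X t) (sSup ((fun s => -X s) '' Icc t u)) := by
  have h1 : Icc (0:ℝ) u = Icc 0 t ∪ Icc t u := (Icc_union_Icc_eq_Icc ht htu).symm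
  rw [Mf, h1, image_union, csSup_union (bddAbove_img hX) ((nonempty_Icc.mpr ht).image _)
    ((isCompact_Icc.image_of_continuousOn (f := fun s => -X s) hX.neg.continuousOn).bddAbove) ((nonempty_Icc.mpr htu).image _)]
  rfl

lemma Mf_zero : Mf X 0 = -X 0 := by
  simp [Mf, Icc_self]

end Basic

section Basic2
include hX hψ

lemma bddBelow_psi_img {t : ℝ} : BddBelow (ψ '' Sf X t) :=
  ((isCompact_Sf hX).image hψ).bddBelow

lemma If_le {t s : ℝ} (hs : s ∈ Sf X t) : If X ψ t ≤ ψ s :=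
  csInf_le (bddBelow_psi_img hX hψ) (mem_image_of_mem _ hs)

lemma le_If {t : ℝ} (ht : 0 ≤ t) {c : ℝ} (hc : ∀ s ∈ Sf X t, c ≤ ψ s) :
    c ≤ If X ψ t :=
  le_csInf (let ⟨s, hs⟩ := exists_Sf hX ht; ⟨ψ s, mem_image_of_mem _ hs⟩)
    (by rintro _ ⟨u, hu, rfl⟩; exact hc u hu)

lemma exists_If {t : ℝ} (ht : 0 ≤ t) : ∃ s ∈ Sf X t, ψ s = If X ψ t := by
  obtain ⟨s, hs, hmin⟩ := (isCompact_Sf hX (X := X) (t := t)).exists_isMinOn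
    ⟨_, (exists_Sf hX ht).choose_spec⟩ hψ.continuousOn
  exact ⟨s, hs, (le_antisymm (le_If hX hψ ht fun u hu => hmin hu) (If_le hX hψ hs))⟩

end Basic2


lemma cont_ball {f : ℝ → ℝ} (hf : Continuous f) (t : ℝ) {ε : ℝ} (hε : 0 < ε) :
    ∃ δ > 0, ∀ s : ℝ, |s - t| < δ → |f s - f t| < ε := by
  obtain ⟨δ, hδ, h⟩ := Metric.continuousAt_iff.1 (hf.continuousAt (x := t)) ε hε
  exact ⟨δ, hδ, fun s hs => by simpa [Real.dist_eq] using h (by simpa [Real.dist_eq] using hs)⟩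

lemma SM1_eq' (X : ℝ → ℝ) (t : ℝ) : SM1 X t = X t + max (Mf X t) 0 := rfl

section Loc
include hX

lemma SM1_nonneg {t : ℝ} (ht : 0 ≤ t) : 0 ≤ SM1 X t := by
  have h1 : -X t ≤ Mf X t := le_Mf hX ⟨ht, le_rfl⟩
  have h2 : -X t ≤ max (Mf X t) 0 := h1.trans (le_max_left _ _)
  rw [SM1_eq']; linarith

lemma boundary_facts {t : ℝ} (ht : 0 ≤ t) (hb : SM1 X t = 0) :
    0 ≤ Mf X t ∧ t ∈ Sf X t := by
  have h1 : -X t ≤ Mf X t := le_Mf hX ⟨ht, le_rfl⟩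
  rw [SM1_eq'] at hb
  have h2 : max (Mf X t) 0 = -X t := by linarith
  have h3 : Mf X t ≤ -X t := h2 ▸ le_max_left _ _
  have h4 : (0:ℝ) ≤ -X t := h2 ▸ le_max_right _ _
  have h5 : -X t = Mf X t := le_antisymm h1 h3
  exact ⟨h5 ▸ h4, ⟨ht, le_rfl⟩, h5⟩

lemma loc_neg {t : ℝ} (ht : 0 ≤ t) (hM : Mf X t < 0) :
    ∃ δ > 0, ∀ u, 0 ≤ u → |u - t| < δ → Mf X u < 0 := by
  have hXt : -X t ≤ Mf X t := le_Mf hX ⟨ht, le_rfl⟩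
  obtain ⟨δ, hδ, hball⟩ := cont_ball hX t (show (0:ℝ) < Mf X t / 2 - Mf X t by linarith)
  have key : ∀ s, |s - t| < δ → -X s < Mf X t / 2 := by
    intro s hs
    have h2 := abs_lt.1 (hball s hs)
    have h3 := h2.1
    linarith
  refine ⟨δ, hδ, fun u hu hut => ?_⟩
  rw [abs_sub_lt_iff] at hut
  rcases le_or_gt u t with h | h
  · exact lt_of_le_of_lt (Mf_mono hX hu h) hM
  · rw [Mf_split hX ht h.le]
    have h2 : sSup ((fun s => -X s) '' Icc t u) ≤ Mf X t / 2 := by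
      apply csSup_le ((nonempty_Icc.mpr h.le).image _)
      rintro _ ⟨s, hs, rfl⟩
      refine (key s ?_).le
      rw [abs_sub_lt_iff]
      exact ⟨by linarith [hs.2], by linarith [hs.1]⟩
    exact max_lt hM (lt_of_le_of_lt h2 (by linarith))

lemma loc_const {t : ℝ} (ht : 0 ≤ t) (hFt : -X t < Mf X t) :
    ∃ δ > 0, ∀ u, 0 ≤ u → |u - t| < δ → Mf X u = Mf X t ∧ Sf X u = Sf X t := by
  obtain ⟨δ, hδ, hball⟩ := cont_ball hX t (show (0:ℝ) < Mf X t - (-X t) by linarith)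
  have key : ∀ s, |s - t| < δ → -X s < Mf X t := by
    intro s hs
    have h2 := abs_lt.1 (hball s hs)
    have h3 := h2.1
    linarith
  obtain ⟨s₀, hs₀⟩ := exists_Sf hX ht
  have hs₀d : s₀ ≤ t - δ := by
    by_contra hcon
    push_neg at hcon
    have h4 : |s₀ - t| < δ := by
      rw [abs_sub_lt_iff]; exact ⟨by linarith [hs₀.1.2], by linarith⟩
    exact absurd hs₀.2 (ne_of_lt (key s₀ h4))
  refine ⟨δ, hδ, fun u hu hut => ?_⟩
  rw [abs_sub_lt_iff] at hut
  have hs₀u : s₀ ∈ Icc 0 u := ⟨hs₀.1.1, by linarith [hut.2]⟩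
  have hMu : Mf X u = Mf X t := by
    apply le_antisymm
    · rcases le_or_gt u t with h | h
      · exact Mf_mono hX hu h
      · rw [Mf_split hX ht h.le]
        refine max_le le_rfl (csSup_le ((nonempty_Icc.mpr h.le).image _) ?_)
        rintro _ ⟨s, hs, rfl⟩
        refine (key s ?_).le
        rw [abs_sub_lt_iff]
        exact ⟨by linarith [hs.2], by linarith [hs.1]⟩
    · calc Mf X t = -X s₀ := hs₀.2.symm
        _ ≤ Mf X u := le_Mf hX hs₀u
  refine ⟨hMu, ?_⟩
  ext x
  constructor
  · rintro ⟨hx1, hx2⟩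
    rw [hMu] at hx2
    refine ⟨⟨hx1.1, ?_⟩, hx2⟩
    by_contra hcon
    push_neg at hcon
    have h4 : |x - t| < δ := by
      rw [abs_sub_lt_iff]; exact ⟨by linarith [hx1.2], by linarith⟩
    exact absurd hx2 (ne_of_lt (key x h4))
  · rintro ⟨hx1, hx2⟩
    have hxd : x ≤ t - δ := by
      by_contra hcon
      push_neg at hcon
      have h4 : |x - t| < δ := by
        rw [abs_sub_lt_iff]; exact ⟨by linarith [hx1.2], by linarith⟩
      exact absurd hx2 (ne_of_lt (key x h4))
    exact ⟨⟨hx1.1, by linarith [hut.2]⟩, by rw [hMu]; exact hx2⟩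

omit hX in
lemma Df_congr {t u : ℝ} (h1 : Mf X u = Mf X t) (h2 : Sf X u = Sf X t) :
    Df X ψ u = Df X ψ t := by
  unfold Df If
  rw [h1, h2]

lemma loc_g {t : ℝ} (ht : 0 ≤ t) (hZ : SM1 X t ≠ 0) :
    ∃ δ > 0, ∀ u, 0 ≤ u → |u - t| < δ →
      gf X ψ u = ψ u + Df X ψ t ∧ 0 < SM1 X u := by
  have hZpos : 0 < SM1 X t := lt_of_le_of_ne (SM1_nonneg hX ht) (Ne.symm hZ)
  rw [SM1_eq'] at hZpos
  rcases lt_or_ge (Mf X t) 0 with hM | hM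
  · obtain ⟨δ₁, hδ₁, h1⟩ := loc_neg hX ht hM
    have hXt : 0 < X t := by rw [max_eq_right hM.le] at hZpos; linarith
    obtain ⟨δ₂, hδ₂, h2⟩ := cont_ball hX t hXt
    refine ⟨min δ₁ δ₂, lt_min hδ₁ hδ₂, fun u hu hut => ?_⟩
    have hMu := h1 u hu (lt_of_lt_of_le hut (min_le_left _ _))
    have hXu : 0 < X u := by
      have h3 := (abs_lt.1 (h2 u (lt_of_lt_of_le hut (min_le_right _ _)))).1
      linarith
    constructor
    · have hDu : Df X ψ u = 0 := by
        unfold Df; rw [if_neg (by linarith), if_neg (by linarith)]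
      have hDt : Df X ψ t = 0 := by
        unfold Df; rw [if_neg (by linarith), if_neg (by linarith)]
      rw [gf, hDu, hDt]
    · rw [SM1_eq', max_eq_right hMu.le]; linarith
  · have hFt : -X t < Mf X t := by
      have h1 : -X t ≤ Mf X t := le_Mf hX ⟨ht, le_rfl⟩
      rw [max_eq_left hM] at hZpos; linarith
    obtain ⟨δ₁, hδ₁, h1⟩ := loc_const hX ht hFt
    have hXM : 0 < X t + Mf X t := by rw [max_eq_left hM] at hZpos; linarith
    obtain ⟨δ₂, hδ₂, h2⟩ := cont_ball hX t hXM
    refine ⟨min δ₁ δ₂, lt_min hδ₁ hδ₂, fun u hu hut => ?_⟩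
    obtain ⟨hMu, hSu⟩ := h1 u hu (lt_of_lt_of_le hut (min_le_left _ _))
    refine ⟨by rw [gf, Df_congr hMu hSu], ?_⟩
    rw [SM1_eq', hMu, max_eq_left hM]
    have h3 := (abs_lt.1 (h2 u (lt_of_lt_of_le hut (min_le_right _ _)))).1
    linarith

end Loc


section Deriv

lemma max_div_pos (a ε : ℝ) (hε : 0 < ε) : max a 0 / ε = max (a / ε) 0 := by
  rcases le_total a 0 with h | h
  · rw [max_eq_right h, max_eq_right (div_nonpos_iff.mpr (Or.inr ⟨h, hε.le⟩))]
    exact zero_div ε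
  · rw [max_eq_left h, max_eq_left (div_nonneg h hε.le)]

include hX hψ

lemma Msup_deriv {t : ℝ} (ht : 0 ≤ t) :
    Tendsto (fun ε : ℝ => (sSup ((fun s => -X s - ε * ψ s) '' Icc 0 t) - Mf X t) / ε)
      (𝓝[>] (0:ℝ)) (𝓝 (-(If X ψ t))) := by
  set M := Mf X t with hM
  set I := If X ψ t with hI
  obtain ⟨sm, hsm, hψsm⟩ := exists_If hX hψ ht
  -- lower bound
  have hlow : ∀ ε : ℝ, 0 < ε →
      -I ≤ (sSup ((fun s => -X s - ε * ψ s) '' Icc 0 t) - M) / ε := by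
    intro ε hε
    have h1 : -X sm - ε * ψ sm ≤ sSup ((fun s => -X s - ε * ψ s) '' Icc 0 t) :=
      le_csSup ((isCompact_Icc.image_of_continuousOn
        ((hX.neg.sub (continuous_const.mul hψ)).continuousOn)).bddAbove)
        (mem_image_of_mem _ hsm.1)
    have h2 : -X sm = M := hsm.2
    rw [le_div_iff₀ hε]
    have : ψ sm = I := hψsm
    nlinarith
  -- upper bound
  have hup : ∀ δ : ℝ, 0 < δ → ∃ ε₀ > 0, ∀ ε : ℝ, 0 < ε → ε < ε₀ →
      (sSup ((fun s => -X s - ε * ψ s) '' Icc 0 t) - M) / ε ≤ -I + δ := by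
    intro δ hδ
    obtain ⟨B, hB⟩ := isCompact_Icc.exists_bound_of_continuousOn (hψ.continuousOn (s := Icc 0 t))
    set C := Icc 0 t ∩ ψ ⁻¹' (Iic (I - δ)) with hC
    have hkey : ∃ ε₀ > 0, ∀ ε : ℝ, 0 < ε → ε < ε₀ → ∀ s ∈ Icc 0 t,
        -X s - ε * ψ s ≤ M + ε * (δ - I) := by
      rcases eq_empty_or_nonempty C with hCe | hCne
      · refine ⟨1, one_pos, fun ε hε _ s hs => ?_⟩
        have hψs : I - δ < ψ s := by
          by_contra hcon
          push_neg at hcon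
          have hmem : s ∈ C := ⟨hs, hcon⟩
          rw [hCe] at hmem
          exact absurd hmem (notMem_empty s)
        have h1 : -X s ≤ M := le_Mf hX hs
        have e1 : ε * (-ψ s) ≤ ε * (δ - I) := mul_le_mul_of_nonneg_left (by linarith) hε.le
        have e2 : ε * (-ψ s) = -(ε * ψ s) := by ring
        have e3 : ε * (δ - I) = ε * δ - ε * I := by ring
        have e8 : 0 < ε * δ := mul_pos hε hδ
        linarith
      · have hCcpt : IsCompact C := isCompact_Icc.inter_right (isClosed_Iic.preimage hψ)
        obtain ⟨c, hc, hcmax⟩ := hCcpt.exists_isMaxOn hCne (hX.neg.continuousOn)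
        have hγ : 0 < M - (-X c) := by
          have h1 : -X c ≤ M := le_Mf hX hc.1
          rcases lt_or_eq_of_le h1 with h | h
          · linarith
          · exfalso
            have : c ∈ Sf X t := ⟨hc.1, h⟩
            have := If_le hX hψ this
            have := hc.2
            simp only [mem_preimage, mem_Iic] at this
            rw [← hI] at *
            linarith
        set γ := M - (-X c) with hγdef
        refine ⟨γ / (B + |I| + δ + 1), ?_, fun ε hε hεlt s hs => ?_⟩
        · apply div_pos hγ
          have := abs_nonneg I
          have := (abs_nonneg (ψ 0)).trans (hB 0 ⟨le_rfl, ht⟩)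
          linarith
        · have hBpos : (0:ℝ) ≤ B := (abs_nonneg (ψ 0)).trans (hB 0 ⟨le_rfl, ht⟩)
          have hεd : ε * (B + |I| + δ + 1) < γ := by
            rw [← lt_div_iff₀ (by positivity)]
            exact hεlt
          rcases le_or_gt (ψ s) (I - δ) with hcase | hcase
          · have h1 : -X s ≤ -X c := hcmax ⟨hs, hcase⟩
            have h2 : -ψ s ≤ B := by
              have := hB s hs
              have := abs_le.1 this
              linarith [this.1]
            have h3 : -I ≤ |I| := neg_le_abs I
            have e2 : ε * (-ψ s) ≤ ε * B := mul_le_mul_of_nonneg_left h2 hε.le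
            have e3 : ε * I ≤ ε * |I| := mul_le_mul_of_nonneg_left (le_abs_self I) hε.le
            have e4 : ε * (δ - I) = ε * δ - ε * I := by ring
            have e5 : ε * (B + |I| + δ + 1) = ε * B + ε * |I| + ε * δ + ε := by ring
            have e6 : ε * (-ψ s) = -(ε * ψ s) := by ring
            have e7 : ε * (-I) = -(ε * I) := by ring
            have e8 : 0 < ε * δ := mul_pos hε hδ
            linarith
          · have h1 : -X s ≤ M := le_Mf hX hs
            have e1 : ε * (-ψ s) ≤ ε * (δ - I) := mul_le_mul_of_nonneg_left (by linarith) hε.le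
            have e2 : ε * (-ψ s) = -(ε * ψ s) := by ring
            linarith
    obtain ⟨ε₀, hε₀, hall⟩ := hkey
    refine ⟨ε₀, hε₀, fun ε hε hεlt => ?_⟩
    rw [div_le_iff₀ hε]
    have h2 : sSup ((fun s => -X s - ε * ψ s) '' Icc 0 t) ≤ M + ε * (δ - I) := by
      apply csSup_le ((nonempty_Icc.mpr ht).image _)
      rintro _ ⟨s, hs, rfl⟩
      exact hall ε hε hεlt s hs
    have e1 : (-I + δ) * ε = ε * (δ - I) := by ring
    linarith
  rw [Metric.tendsto_nhdsWithin_nhds]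
  intro ρ hρ
  obtain ⟨ε₀, hε₀, h⟩ := hup (ρ/2) (by linarith)
  refine ⟨ε₀, hε₀, fun ε hεmem hεd => ?_⟩
  have hε : 0 < ε := hεmem
  have hεlt : ε < ε₀ := by
    rw [Real.dist_eq] at hεd
    have := abs_lt.1 hεd
    linarith [this.2]
  have hl := hlow ε hε
  have hu := h ε hε hεlt
  rw [Real.dist_eq, abs_lt]
  exact ⟨by linarith, by linarith⟩

lemma SM1_deriv {t : ℝ} (ht : 0 ≤ t) :
    Tendsto (fun ε : ℝ => (SM1 (fun s => X s + ε * ψ s) t - SM1 X t) / ε)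
      (𝓝[>] (0:ℝ)) (𝓝 (gf X ψ t)) := by
  set M := Mf X t with hMdef
  set I := If X ψ t with hIdef
  set N : ℝ → ℝ := fun ε => sSup ((fun s => -X s - ε * ψ s) '' Icc 0 t) with hNdef
  have hSM : ∀ ε : ℝ, SM1 (fun s => X s + ε * ψ s) t = X t + ε * ψ t + max (N ε) 0 := by
    intro ε
    have : (fun s => -(X s + ε * ψ s)) = fun s => -X s - ε * ψ s := by
      funext s; ring
    rw [SM1, this]
  have hq := Msup_deriv hX hψ ht
  have hεpos : ∀ᶠ ε in 𝓝[>] (0:ℝ), (0:ℝ) < ε := self_mem_nhdsWithin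
  have hN0 : Tendsto (fun ε => N ε - M) (𝓝[>] (0:ℝ)) (𝓝 0) := by
    have hid : Tendsto (fun ε : ℝ => ε) (𝓝[>] (0:ℝ)) (𝓝 0) :=
      tendsto_id.mono_right nhdsWithin_le_nhds
    have := hq.mul hid
    rw [mul_zero] at this
    apply this.congr'
    filter_upwards [hεpos] with ε hε
    field_simp
    rfl
  rcases lt_trichotomy M 0 with hM | hM | hM
  · -- M < 0
    have hNneg : ∀ᶠ ε in 𝓝[>] (0:ℝ), N ε < 0 := by
      filter_upwards [hN0.eventually (eventually_lt_nhds (show (0:ℝ) < -M by linarith))]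
        with ε hε
      linarith
    have hgt : gf X ψ t = ψ t := by
      rw [gf]
      have : Df X ψ t = 0 := by unfold Df; rw [if_neg (by rw [← hMdef]; linarith),
        if_neg (by rw [← hMdef]; linarith)]
      rw [this, add_zero]
    rw [hgt]
    apply Tendsto.congr' _ (tendsto_const_nhds)
    filter_upwards [hεpos, hNneg] with ε hε hNε
    rw [hSM ε, SM1_eq', ← hMdef, max_eq_right hNε.le, max_eq_right hM.le]
    field_simp
    ring
  · -- M = 0
    have hqd : Tendsto (fun ε => ψ t + max ((N ε - M)/ε) 0) (𝓝[>] (0:ℝ))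
        (𝓝 (ψ t + max (-I) 0)) :=
      tendsto_const_nhds.add (hq.max tendsto_const_nhds)
    have hgt : gf X ψ t = ψ t + max (-I) 0 := by
      rw [gf]
      congr 1
      unfold Df
      rw [if_neg (by rw [← hMdef, hM]; exact lt_irrefl 0), if_pos (by rw [← hMdef]; exact hM),
        ← hIdef]
    rw [hgt]
    apply Tendsto.congr' _ hqd
    filter_upwards [hεpos] with ε hε
    rw [hSM ε, SM1_eq', ← hMdef, hM, max_self, add_zero, sub_zero]
    rw [show X t + ε * ψ t + max (N ε) 0 - X t = ε * ψ t + max (N ε) 0 by ring,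
      add_div, mul_div_cancel_left₀ _ (ne_of_gt hε), max_div_pos _ _ hε]
  · -- M > 0
    have hNpos : ∀ᶠ ε in 𝓝[>] (0:ℝ), 0 < N ε := by
      filter_upwards [hN0.eventually (eventually_gt_nhds (show -M < (0:ℝ) by linarith))]
        with ε hε
      linarith
    have hqd : Tendsto (fun ε => ψ t + (N ε - M)/ε) (𝓝[>] (0:ℝ)) (𝓝 (ψ t + -I)) :=
      tendsto_const_nhds.add hq
    have hgt : gf X ψ t = ψ t + -I := by
      rw [gf]
      congr 1
      unfold Df
      rw [if_pos (by rw [← hMdef]; exact hM), ← hIdef]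
    rw [hgt]
    apply Tendsto.congr' _ hqd
    filter_upwards [hεpos, hNpos] with ε hε hNε
    rw [hSM ε, SM1_eq', ← hMdef, max_eq_left hNε.le, max_eq_left hM.le]
    rw [show X t + ε * ψ t + N ε - (X t + M) = ε * ψ t + (N ε - M) by ring, add_div,
      mul_div_cancel_left₀ _ (ne_of_gt hε)]

end Deriv


section Limits
include hX hψ

lemma psi_tendsto_left (t : ℝ) : Tendsto ψ (𝓝[<] t) (𝓝 (ψ t)) :=
  (hψ.continuousAt (x := t)).tendsto.mono_left nhdsWithin_le_nhds

lemma psi_tendsto_right (t : ℝ) : Tendsto ψ (𝓝[>] t) (𝓝 (ψ t)) :=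
  (hψ.continuousAt (x := t)).tendsto.mono_left nhdsWithin_le_nhds

/-- If the running max is strictly smaller at all earlier times, the argmin of `ψ` over the
argmax set converges to `ψ t` from the left. -/
lemma If_left_strict {t : ℝ} (ht : 0 < t) (htS : t ∈ Sf X t)
    (hstrict : ∀ u, 0 ≤ u → u < t → Mf X u < Mf X t) :
    Tendsto (If X ψ) (𝓝[<] t) (𝓝 (ψ t)) := by
  rw [Metric.tendsto_nhdsWithin_nhds]
  intro ε hε
  obtain ⟨δψ, hδψ, hoscψ⟩ := cont_ball hψ t hε
  set δ : ℝ := min δψ (t / 2) with hδdef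
  have hδpos : 0 < δ := lt_min hδψ (by linarith)
  have hδt : δ ≤ t / 2 := min_le_right _ _
  have htδ : 0 ≤ t - δ := by linarith
  set c : ℝ := Mf X (t - δ) with hcdef
  have hc : c < Mf X t := hstrict _ htδ (by linarith)
  obtain ⟨δ₂, hδ₂, hoscX⟩ := cont_ball hX t (show (0:ℝ) < Mf X t - c by linarith)
  refine ⟨min δ δ₂, lt_min hδpos hδ₂, fun u hu hud => ?_⟩
  rw [Real.dist_eq, abs_sub_lt_iff] at hud
  have hut : u < t := hu
  have hu0 : 0 ≤ u := by
    have := hud.2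
    have h1 : min δ δ₂ ≤ δ := min_le_left _ _
    linarith
  have hud2 : |u - t| < δ₂ := by
    rw [abs_sub_lt_iff]
    have h1 := min_le_right δ δ₂
    exact ⟨by linarith [hud.1], by linarith [hud.2]⟩
  have hXu : c < -X u := by
    have h1 := (abs_lt.1 (hoscX u hud2)).2
    have h2 : -X t = Mf X t := htS.2
    linarith
  have hMu : c < Mf X u := lt_of_lt_of_le hXu (le_Mf hX ⟨hu0, le_rfl⟩)
  obtain ⟨m, hm, hψm⟩ := exists_If hX hψ hu0
  have hmgt : t - δ < m := by
    by_contra hcon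
    push_neg at hcon
    have h1 : -X m ≤ c := le_Mf hX ⟨hm.1.1, hcon⟩
    rw [hm.2] at h1
    linarith
  have hmd : |m - t| < δψ := by
    rw [abs_sub_lt_iff]
    have h1 : m ≤ u := hm.1.2
    have h2 : δ ≤ δψ := min_le_left _ _
    exact ⟨by linarith, by linarith⟩
  rw [Real.dist_eq, ← hψm]
  exact hoscψ m hmd

/-- If the running max is strictly larger at all later times, the argmin of `ψ` over the
argmax set converges to `ψ t` from the right. -/
lemma If_right_strict {t : ℝ} (ht : 0 ≤ t)
    (hstrict : ∀ u, t < u → Mf X t < Mf X u) :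
    Tendsto (If X ψ) (𝓝[>] t) (𝓝 (ψ t)) := by
  rw [Metric.tendsto_nhdsWithin_nhds]
  intro ε hε
  obtain ⟨δψ, hδψ, hoscψ⟩ := cont_ball hψ t hε
  refine ⟨δψ, hδψ, fun u hu hud => ?_⟩
  rw [Real.dist_eq, abs_sub_lt_iff] at hud
  have htu : t < u := hu
  have hu0 : 0 ≤ u := le_trans ht htu.le
  obtain ⟨m, hm, hψm⟩ := exists_If hX hψ hu0
  have hmgt : t < m := by
    by_contra hcon
    push_neg at hcon
    have h1 : -X m ≤ Mf X t := le_Mf hX ⟨hm.1.1, hcon⟩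
    have h2 := hstrict u htu
    rw [hm.2] at h1
    linarith
  have hmd : |m - t| < δψ := by
    rw [abs_sub_lt_iff]
    have h1 : m ≤ u := hm.1.2
    exact ⟨by linarith [hud.1], by linarith⟩
  rw [Real.dist_eq, ← hψm]
  exact hoscψ m hmd

/-- If the running max is constant on `[t, τ]`, then `If` converges to `If t` from the right. -/
lemma If_right_const {t τ : ℝ} (ht : 0 ≤ t) (htτ : t < τ) (hMτ : Mf X τ = Mf X t)
    (htS : t ∈ Sf X t) :
    Tendsto (If X ψ) (𝓝[>] t) (𝓝 (If X ψ t)) := by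
  have hMconst : ∀ u, t < u → u ≤ τ → Mf X u = Mf X t := fun u h1 h2 =>
    le_antisymm (hMτ ▸ Mf_mono hX (ht.trans h1.le) h2) (Mf_mono hX ht h1.le)
  have hSsub : ∀ u, t < u → u ≤ τ → Sf X t ⊆ Sf X u := by
    intro u h1 h2 x hx
    exact ⟨⟨hx.1.1, hx.1.2.trans h1.le⟩, by rw [hMconst u h1 h2]; exact hx.2⟩
  rw [Metric.tendsto_nhdsWithin_nhds]
  intro ε hε
  obtain ⟨δψ, hδψ, hoscψ⟩ := cont_ball hψ t (half_pos hε)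
  refine ⟨min δψ (τ - t), lt_min hδψ (by linarith), fun u hu hud => ?_⟩
  rw [Real.dist_eq, abs_sub_lt_iff] at hud
  have htu : t < u := hu
  have hu0 : 0 ≤ u := le_trans ht htu.le
  have huτ : u ≤ τ := by
    have := hud.1
    have := min_le_right δψ (τ - t)
    linarith
  have hle : If X ψ u ≤ If X ψ t :=
    csInf_le_csInf (bddBelow_psi_img hX hψ)
      (let ⟨s, hs⟩ := exists_Sf hX ht; ⟨ψ s, mem_image_of_mem _ hs⟩)
      (image_mono (hSsub u htu huτ))
  have hge : If X ψ t - ε/2 ≤ If X ψ u := by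
    apply le_If hX hψ hu0
    intro x hx
    rcases le_or_gt x t with hxt | hxt
    · have : x ∈ Sf X t := ⟨⟨hx.1.1, hxt⟩, by rw [← hMconst u htu huτ]; exact hx.2⟩
      have := If_le hX hψ this
      linarith
    · have hxd : |x - t| < δψ := by
        rw [abs_sub_lt_iff]
        have h1 : x ≤ u := hx.1.2
        have := min_le_left δψ (τ - t)
        exact ⟨by linarith [hud.1], by linarith⟩
      have h2 := (abs_lt.1 (hoscψ x hxd)).1
      have h3 : If X ψ t ≤ ψ t := If_le hX hψ htS
      linarith
  rw [Real.dist_eq, abs_sub_lt_iff]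
  constructor <;> linarith

end Limits


section DfEval
variable {u : ℝ}

lemma Df_pos (h : 0 < Mf X u) : Df X ψ u = -(If X ψ u) := by
  unfold Df; rw [if_pos h]

lemma Df_zero (h : Mf X u = 0) : Df X ψ u = max (-(If X ψ u)) 0 := by
  unfold Df; rw [if_neg (by rw [h]; exact lt_irrefl 0), if_pos h]

lemma Df_negM (h : Mf X u < 0) : Df X ψ u = 0 := by
  unfold Df; rw [if_neg (by linarith), if_neg (by linarith)]

end DfEval

section LeftLim
include hX hψ

lemma left_lim {t : ℝ} (ht : 0 < t) :
    ∃ L, Tendsto (gf X ψ) (𝓝[<] t) (𝓝 L) ∧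
      (SM1 X t ≠ 0 → L = gf X ψ t) ∧
      (SM1 X t = 0 → gf X ψ t = max L 0 ∧
        (If X ψ t < ψ t → L = gf X ψ t) ∧
        (Mf X t = 0 → 0 ≤ If X ψ t → L = ψ t)) := by
  by_cases hZ : SM1 X t = 0
  · -- boundary case
    obtain ⟨hM0, htS⟩ := boundary_facts hX ht.le hZ
    by_cases hR1 : ∃ s, s ∈ Sf X t ∧ s < t
    · -- max attained strictly before t
      obtain ⟨s₀, hs₀S, hs₀t⟩ := hR1
      have hs₀0 : 0 ≤ s₀ := hs₀S.1.1
      set Im : ℝ := sInf (ψ '' (Sf X t ∩ Iio t)) with hImdef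
      have hne : (Sf X t ∩ Iio t).Nonempty := ⟨s₀, hs₀S, hs₀t⟩
      have hbddB : BddBelow (ψ '' (Sf X t ∩ Iio t)) :=
        BddBelow.mono (image_mono inter_subset_left) (bddBelow_psi_img hX hψ)
      have hSd : Sf X t = (Sf X t ∩ Iio t) ∪ {t} := by
        ext x
        constructor
        · intro hx
          rcases lt_or_eq_of_le hx.1.2 with h | h
          · exact Or.inl ⟨hx, h⟩
          · exact Or.inr (by simp [h])
        · rintro (hx | hx)
          · exact hx.1
          · simp only [mem_singleton_iff] at hx
            rw [hx]; exact htS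
      have hImin : If X ψ t = min Im (ψ t) := by
        rw [If, hSd, image_union, image_singleton,
          csInf_union hbddB (hne.image _) bddBelow_singleton (singleton_nonempty _),
          csInf_singleton]
      have hImge : If X ψ t ≤ Im := by rw [hImin]; exact min_le_left _ _
      have hMSu : ∀ u, s₀ ≤ u → u < t → Mf X u = Mf X t ∧ Sf X u = Sf X t ∩ Icc 0 u := by
        intro u hs₀u hut
        have hu0 : 0 ≤ u := hs₀0.trans hs₀u
        have hMu : Mf X u = Mf X t := by
          apply le_antisymm (Mf_mono hX hu0 hut.le)
          calc Mf X t = -X s₀ := hs₀S.2.symm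
            _ ≤ Mf X u := le_Mf hX ⟨hs₀0, hs₀u⟩
        refine ⟨hMu, ?_⟩
        ext x
        constructor
        · rintro ⟨hx1, hx2⟩
          exact ⟨⟨⟨hx1.1, hx1.2.trans hut.le⟩, by rw [← hMu]; exact hx2⟩, hx1⟩
        · rintro ⟨hx1, hx2⟩
          exact ⟨hx2, by rw [hMu]; exact hx1.2⟩
      have hItendsto : Tendsto (If X ψ) (𝓝[<] t) (𝓝 Im) := by
        rw [Metric.tendsto_nhdsWithin_nhds]
        intro ε hε
        obtain ⟨y, hy, hylt⟩ := exists_lt_of_csInf_lt (hne.image ψ)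
          (show Im < Im + ε by linarith)
        obtain ⟨x, hx, rfl⟩ := hy
        refine ⟨t - max s₀ x, by
          have h1 : max s₀ x < t := max_lt hs₀t hx.2
          linarith, fun u hu hud => ?_⟩
        rw [Real.dist_eq, abs_sub_lt_iff] at hud
        have hut : u < t := hu
        have hugt : max s₀ x < u := by linarith [hud.2]
        have hus₀ : s₀ ≤ u := ((le_max_left s₀ x).trans hugt.le)
        have hu0 : 0 ≤ u := hs₀0.trans hus₀
        obtain ⟨hMu, hSu⟩ := hMSu u hus₀ hut
        have hxu : x ∈ Sf X u := by
          rw [hSu]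
          exact ⟨hx.1, hx.1.1.1, ((le_max_right s₀ x).trans hugt.le)⟩
        have hle : If X ψ u ≤ ψ x := If_le hX hψ hxu
        have hge : Im ≤ If X ψ u := by
          apply le_If hX hψ hu0
          intro z hz
          rw [hSu] at hz
          exact csInf_le hbddB (mem_image_of_mem _ ⟨hz.1, lt_of_le_of_lt hz.2.2 hut⟩)
        rw [Real.dist_eq, abs_sub_lt_iff]
        exact ⟨by linarith, by linarith⟩
      have hIoo : Ioo s₀ t ∈ 𝓝[<] t := Ioo_mem_nhdsLT_of_mem ⟨hs₀t, le_rfl⟩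
      rcases lt_or_eq_of_le hM0 with hMpos | hMzero
      · -- M t > 0
        refine ⟨ψ t - Im, ?_, fun h => absurd hZ h, fun _ => ?_⟩
        · apply Tendsto.congr' _ ((psi_tendsto_left hX hψ t).sub hItendsto)
          filter_upwards [hIoo] with u hu
          have hu0 : 0 ≤ u := hs₀0.trans hu.1.le
          obtain ⟨hMu, _⟩ := hMSu u hu.1.le hu.2
          rw [gf, Df_pos (by rw [hMu]; exact hMpos)]
          ring
        · have hgt : gf X ψ t = ψ t - min Im (ψ t) := by
            rw [gf, Df_pos hMpos, hImin]; ring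
          refine ⟨?_, fun hlt => ?_, fun hMz => absurd hMz (by linarith)⟩
          · rw [hgt]
            simp only [min_def, max_def]
            split_ifs <;> linarith
          · have h1 : Im < ψ t := by
              rw [hImin] at hlt
              rcases le_total Im (ψ t) with h | h
              · rwa [min_eq_left h] at hlt
              · rw [min_eq_right h] at hlt; linarith
            rw [hgt, min_eq_left h1.le]
      · -- M t = 0
        refine ⟨ψ t + max (-Im) 0, ?_, fun h => absurd hZ h, fun _ => ?_⟩
        · apply Tendsto.congr' _ ((psi_tendsto_left hX hψ t).add
            ((hItendsto.neg).max tendsto_const_nhds))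
          filter_upwards [hIoo] with u hu
          obtain ⟨hMu, _⟩ := hMSu u hu.1.le hu.2
          rw [gf, Df_zero (by rw [hMu]; exact hMzero.symm)]
        · have hgt : gf X ψ t = ψ t + max (-(min Im (ψ t))) 0 := by
            rw [gf, Df_zero hMzero.symm, hImin]
          refine ⟨?_, fun hlt => ?_, fun _ hIf => ?_⟩
          · rw [hgt]
            simp only [min_def, max_def]
            split_ifs <;> linarith
          · have h1 : Im < ψ t := by
              rw [hImin] at hlt
              rcases le_total Im (ψ t) with h | h
              · rwa [min_eq_left h] at hlt
              · rw [min_eq_right h] at hlt; linarith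
            rw [hgt, min_eq_left h1.le]
          · have h1 : 0 ≤ Im := le_trans hIf hImge
            rw [max_eq_right (by linarith), add_zero]
    · -- max attained only at t
      push_neg at hR1
      have hstrict : ∀ u, 0 ≤ u → u < t → Mf X u < Mf X t := by
        intro u hu0 hut
        obtain ⟨x, hx⟩ := exists_Sf hX hu0
        have hxt : x < t := lt_of_le_of_lt hx.1.2 hut
        have h1 : -X x ≤ Mf X t := le_Mf hX ⟨hx.1.1, hxt.le⟩
        rcases lt_or_eq_of_le h1 with h | h
        · rw [← hx.2]; exact h
        · exact absurd hxt (not_lt.2 (hR1 x ⟨⟨hx.1.1, hxt.le⟩, h⟩))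
      have hIft : If X ψ t = ψ t := by
        apply le_antisymm (If_le hX hψ htS)
        apply le_If hX hψ ht.le
        intro x hx
        have h1 : x = t := le_antisymm hx.1.2 (hR1 x hx)
        rw [h1]
      rcases lt_or_eq_of_le hM0 with hMpos | hMzero
      · -- M t > 0, strict increase from left: L = 0
        have hXt : -X t = Mf X t := htS.2
        obtain ⟨δ₃, hδ₃, hosc⟩ := cont_ball hX t hMpos
        have hlow : max (t - δ₃) 0 < t := max_lt (by linarith) ht
        refine ⟨0, ?_, fun h => absurd hZ h, fun _ => ?_⟩
        · have h0 : (0:ℝ) = ψ t - ψ t := by ring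
          rw [h0]
          apply Tendsto.congr' _ ((psi_tendsto_left hX hψ t).sub
            (If_left_strict hX hψ ht htS hstrict))
          filter_upwards [Ioo_mem_nhdsLT_of_mem ⟨hlow, le_rfl⟩] with u hu
          have hu0 : 0 ≤ u := (le_max_right (t - δ₃) 0).trans hu.1.le
          have hMu : 0 < Mf X u := by
            have h1 : |u - t| < δ₃ := by
              rw [abs_sub_lt_iff]
              have h2 : t - δ₃ ≤ max (t - δ₃) 0 := le_max_left _ _
              exact ⟨by linarith [hu.2], by linarith [hu.1]⟩
            have h2 := (abs_lt.1 (hosc u h1)).2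
            have h3 : 0 < -X u := by linarith
            exact lt_of_lt_of_le h3 (le_Mf hX ⟨hu0, le_rfl⟩)
          rw [gf, Df_pos hMu]
          ring
        · have hgt : gf X ψ t = 0 := by
            rw [gf, Df_pos hMpos, hIft]; ring
          exact ⟨by rw [hgt, max_self], fun hlt => by rw [hIft] at hlt; linarith,
            fun hMz => absurd hMz (by linarith)⟩
      · -- M t = 0, M < 0 strictly before t : L = ψ t
        refine ⟨ψ t, ?_, fun h => absurd hZ h, fun _ => ?_⟩
        · apply Tendsto.congr' _ (psi_tendsto_left hX hψ t)
          filter_upwards [Ioo_mem_nhdsLT_of_mem ⟨(show max 0 (t - 1) < t by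
            apply max_lt ht; linarith), le_rfl⟩] with u hu
          have hu0 : 0 ≤ u := (le_max_left 0 (t - 1)).trans hu.1.le
          have hMu : Mf X u < 0 := by
            have h1 := hstrict u hu0 hu.2
            rw [hMzero]; exact h1
          rw [gf, Df_negM hMu, add_zero]
        · have hgt : gf X ψ t = ψ t + max (-ψ t) 0 := by
            rw [gf, Df_zero hMzero.symm, hIft]
          refine ⟨?_, fun hlt => by rw [hIft] at hlt; linarith, fun _ _ => rfl⟩
          rw [hgt]
          simp only [max_def]
          split_ifs <;> linarith
  · -- non-boundary case
    obtain ⟨δ, hδ, hloc⟩ := loc_g hX ht.le hZ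
    have hlow : max (t - δ) 0 < t := max_lt (by linarith) ht
    refine ⟨gf X ψ t, ?_, fun _ => rfl, fun h => absurd h hZ⟩
    have hgt : gf X ψ t = ψ t + Df X ψ t := rfl
    rw [hgt]
    apply Tendsto.congr' _ ((psi_tendsto_left hX hψ t).add tendsto_const_nhds)
    filter_upwards [Ioo_mem_nhdsLT_of_mem ⟨hlow, le_rfl⟩] with u hu
    have hu0 : 0 ≤ u := (le_max_right (t - δ) 0).trans hu.1.le
    have hud : |u - t| < δ := by
      rw [abs_sub_lt_iff]
      have h2 : t - δ ≤ max (t - δ) 0 := le_max_left _ _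
      exact ⟨by linarith [hu.2], by linarith [hu.1]⟩
    exact ((hloc u hu0 hud).1).symm ▸ rfl

end LeftLim


section RightLim
include hX hψ

lemma right_lim {t : ℝ} (ht : 0 ≤ t) :
    ∃ L, Tendsto (gf X ψ) (𝓝[>] t) (𝓝 L) ∧
      (SM1 X t ≠ 0 → L = gf X ψ t) ∧
      (SM1 X t = 0 →
        ((∃ τ, t < τ ∧ Mf X τ = Mf X t) → L = gf X ψ t) ∧
        ((∀ u, t < u → Mf X t < Mf X u) → L = 0)) := by
  by_cases hZ : SM1 X t = 0
  · obtain ⟨hM0, htS⟩ := boundary_facts hX ht hZ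
    by_cases hRR : ∃ τ, t < τ ∧ Mf X τ = Mf X t
    · -- M locally constant to the right
      obtain ⟨τ, htτ, hMτ⟩ := hRR
      have hItendsto := If_right_const hX hψ ht htτ hMτ htS
      have hIoo : Ioo t τ ∈ 𝓝[>] t := Ioo_mem_nhdsGT_of_mem ⟨le_rfl, htτ⟩
      have hMconst : ∀ u, t < u → u < τ → Mf X u = Mf X t := fun u h1 h2 =>
        le_antisymm (hMτ ▸ Mf_mono hX (ht.trans h1.le) h2.le) (Mf_mono hX ht h1.le)
      have hnot : ¬ (∀ u, t < u → Mf X t < Mf X u) := by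
        intro h
        have := h τ htτ
        rw [hMτ] at this
        exact lt_irrefl _ this
      rcases lt_or_eq_of_le hM0 with hMpos | hMzero
      · refine ⟨gf X ψ t, ?_, fun _ => rfl, fun _ => ⟨fun _ => rfl, fun h => absurd h hnot⟩⟩
        have hgt : gf X ψ t = ψ t - If X ψ t := by rw [gf, Df_pos hMpos]; ring
        rw [hgt]
        apply Tendsto.congr' _ ((psi_tendsto_right hX hψ t).sub hItendsto)
        filter_upwards [hIoo] with u hu
        rw [gf, Df_pos (by rw [hMconst u hu.1 hu.2]; exact hMpos)]
        ring
      · refine ⟨gf X ψ t, ?_, fun _ => rfl, fun _ => ⟨fun _ => rfl, fun h => absurd h hnot⟩⟩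
        have hgt : gf X ψ t = ψ t + max (-(If X ψ t)) 0 := by rw [gf, Df_zero hMzero.symm]
        rw [hgt]
        apply Tendsto.congr' _ ((psi_tendsto_right hX hψ t).add
          ((hItendsto.neg).max tendsto_const_nhds))
        filter_upwards [hIoo] with u hu
        rw [gf, Df_zero (by rw [hMconst u hu.1 hu.2]; exact hMzero.symm)]
    · -- M strictly increasing to the right : L = 0
      push_neg at hRR
      have hstrict : ∀ u, t < u → Mf X t < Mf X u := fun u hu =>
        lt_of_le_of_ne (Mf_mono hX ht hu.le) (fun h => (hRR u hu) h.symm)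
      refine ⟨0, ?_, fun h => absurd hZ h, fun _ => ⟨?_, fun _ => rfl⟩⟩
      · have h0 : (0:ℝ) = ψ t - ψ t := by ring
        rw [h0]
        apply Tendsto.congr' _ ((psi_tendsto_right hX hψ t).sub
          (If_right_strict hX hψ ht hstrict))
        filter_upwards [self_mem_nhdsWithin] with u hu
        have htu : t < u := hu
        rw [gf, Df_pos (lt_of_le_of_lt hM0 (hstrict u htu))]
        ring
      · rintro ⟨τ, h1, h2⟩
        exact absurd h2 (hRR τ h1)
  · obtain ⟨δ, hδ, hloc⟩ := loc_g hX ht hZ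
    refine ⟨gf X ψ t, ?_, fun _ => rfl, fun h => absurd h hZ⟩
    have hgt : gf X ψ t = ψ t + Df X ψ t := rfl
    rw [hgt]
    apply Tendsto.congr' _ ((psi_tendsto_right hX hψ t).add tendsto_const_nhds)
    filter_upwards [Ioo_mem_nhdsGT_of_mem ⟨le_rfl, (show t < t + δ by linarith)⟩] with u hu
    have hu0 : 0 ≤ u := ht.trans hu.1.le
    have hud : |u - t| < δ := by
      rw [abs_sub_lt_iff]
      exact ⟨by linarith [hu.2], by linarith [hu.1]⟩
    exact ((hloc u hu0 hud).1).symm ▸ rfl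

end RightLim


section Jitter
include hX hψ

variable (hJ : ∀ t : ℝ, 0 ≤ t → SM1 X t = 0 →
    ∀ s u : ℝ, s < t → t < u →
      ∃ a ∈ Ioo (max s 0) u, ∃ b ∈ Ioo (max s 0) u,
        max (Mf X a) 0 ≠ max (Mf X b) 0)

omit hψ in
include hJ in
/-- At a boundary point with zero running max, the running max becomes positive immediately. -/
lemma jitter_M_zero {t : ℝ} (ht : 0 ≤ t) (hb : SM1 X t = 0) (hM : Mf X t = 0) :
    ∀ u, t < u → 0 < Mf X u := by
  intro u hu
  by_contra hcon
  push_neg at hcon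
  obtain ⟨a, ha, b, hbmem, hne⟩ := hJ t ht hb (t - 1) u (by linarith) hu
  have hY : ∀ c, c ∈ Ioo (max (t - 1) 0) u → max (Mf X c) 0 = 0 := by
    intro c hc
    have hc0 : 0 ≤ c := (le_max_right (t - 1) 0).trans hc.1.le
    have h1 : Mf X c ≤ Mf X u := Mf_mono hX hc0 hc.2.le
    exact max_eq_right (by linarith)
  exact hne (by rw [hY a ha, hY b hbmem])

omit hψ in
include hJ in
/-- At a boundary point after which the running max stays flat for a while, the max over
`[0,t]` is attained only at `t`. -/
lemma jitter_noR1 {t τ : ℝ} (ht : 0 ≤ t) (hb : SM1 X t = 0) (htτ : t < τ)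
    (hMτ : Mf X τ = Mf X t) : ∀ x ∈ Sf X t, x = t := by
  obtain ⟨hM0, htS⟩ := boundary_facts hX ht hb
  have hMpos : 0 < Mf X t := by
    rcases lt_or_eq_of_le hM0 with h | h
    · exact h
    · exfalso
      have := jitter_M_zero hX hJ ht hb h.symm τ htτ
      rw [hMτ, ← h] at this
      exact lt_irrefl 0 this
  intro x hx
  rcases lt_or_eq_of_le hx.1.2 with hxt | hxt
  · exfalso
    have hx0 : 0 ≤ x := hx.1.1
    have hYconst : ∀ v, v ∈ Ioo (max x 0) τ → max (Mf X v) 0 = max (Mf X t) 0 := by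
      intro v hv
      have hv0 : 0 ≤ v := (le_max_right x 0).trans hv.1.le
      have hxv : x ≤ v := (le_max_left x 0).trans hv.1.le
      have h1 : Mf X t ≤ Mf X v := by
        calc Mf X t = -X x := hx.2.symm
          _ ≤ Mf X v := le_Mf hX ⟨hx0, hxv⟩
      have h2 : Mf X v ≤ Mf X t := by
        rw [← hMτ]; exact Mf_mono hX hv0 hv.2.le
      rw [le_antisymm h2 h1]
    obtain ⟨a, ha, b, hbmem, hne⟩ := hJ t ht hb x τ hxt htτ
    exact hne (by rw [hYconst a ha, hYconst b hbmem])
  · exact hxt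

include hJ in
/-- At a boundary point, `gf` tends to `0` from the right. -/
lemma boundary_right_zero {t : ℝ} (ht : 0 ≤ t) (hb : SM1 X t = 0) :
    Tendsto (gf X ψ) (𝓝[>] t) (𝓝 0) := by
  obtain ⟨hM0, htS⟩ := boundary_facts hX ht hb
  obtain ⟨L, htend, _, hbd⟩ := right_lim hX hψ ht
  by_cases hRR : ∃ τ, t < τ ∧ Mf X τ = Mf X t
  · obtain ⟨τ, htτ, hMτ⟩ := hRR
    have hL : L = gf X ψ t := (hbd hb).1 ⟨τ, htτ, hMτ⟩
    have hMpos : 0 < Mf X t := by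
      rcases lt_or_eq_of_le hM0 with h | h
      · exact h
      · exfalso
        have := jitter_M_zero hX hJ ht hb h.symm τ htτ
        rw [hMτ, ← h] at this
        exact lt_irrefl 0 this
    have hIft : If X ψ t = ψ t := by
      apply le_antisymm (If_le hX hψ htS)
      apply le_If hX hψ ht
      intro x hx
      rw [jitter_noR1 hX hJ ht hb htτ hMτ x hx]
    have hgt : gf X ψ t = 0 := by
      rw [gf, Df_pos hMpos, hIft]; ring
    rw [hL, hgt] at htend
    exact htend
  · push_neg at hRR
    have hstrict : ∀ u, t < u → Mf X t < Mf X u := fun u hu =>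
      lt_of_le_of_ne (Mf_mono hX ht hu.le) (fun h => (hRR u hu) h.symm)
    have hL : L = 0 := (hbd hb).2 hstrict
    rw [hL] at htend
    exact htend

omit hψ in
/-- On an interval where `Z > 0`, the running max and argmax set are frozen (or stay negative). -/
lemma const_on_pos {s t' : ℝ} (hs : 0 ≤ s) (hst : s < t')
    (hpos : ∀ u ∈ Ioc s t', 0 < SM1 X u) :
    (∀ u ∈ Icc s t', Mf X u < 0) ∨
    (∀ u ∈ Icc s t', Mf X u = Mf X s ∧ Sf X u = Sf X s) := by
  have W : ∀ u ∈ Ioc s t', ∀ w ∈ Sf X u, 0 ≤ -X w → w ≤ s := by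
    intro u hu w hw hXw
    by_contra hcon
    push_neg at hcon
    have hw0 : 0 ≤ w := hw.1.1
    have h1 : Mf X w ≤ Mf X u := Mf_mono hX hw0 hw.1.2
    have h2 : -X w ≤ Mf X w := le_Mf hX ⟨hw0, le_rfl⟩
    have h3 : Mf X w = -X w := by rw [hw.2] at h2 ⊢; linarith
    have h4 : SM1 X w = 0 := by
      rw [SM1_eq', h3, max_eq_left hXw]; ring
    have := hpos w ⟨hcon, hw.1.2.trans hu.2⟩
    rw [h4] at this
    exact lt_irrefl 0 this
  rcases lt_or_ge (Mf X s) 0 with hMs | hMs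
  · left
    intro u hu
    by_contra hcon
    push_neg at hcon
    rcases eq_or_lt_of_le hu.1 with h | h
    · rw [← h] at hcon; linarith
    · have hu0 : 0 ≤ u := hs.trans hu.1
      obtain ⟨w, hw⟩ := exists_Sf hX hu0
      have hXw : 0 ≤ -X w := by rw [hw.2]; exact hcon
      have hws : w ≤ s := W u ⟨h, hu.2⟩ w hw hXw
      have : -X w ≤ Mf X s := le_Mf hX ⟨hw.1.1, hws⟩
      rw [hw.2] at this
      linarith [Mf_mono hX hs hu.1]
  · right
    intro u hu
    rcases eq_or_lt_of_le hu.1 with h | h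
    · rw [← h]; exact ⟨rfl, rfl⟩
    · have hu0 : 0 ≤ u := hs.trans hu.1
      have hMu : Mf X u = Mf X s := by
        apply le_antisymm _ (Mf_mono hX hs hu.1)
        by_contra hcon
        push_neg at hcon
        obtain ⟨w, hw⟩ := exists_Sf hX hu0
        have hXw : 0 ≤ -X w := by rw [hw.2]; linarith
        have hws : w ≤ s := W u ⟨h, hu.2⟩ w hw hXw
        have : -X w ≤ Mf X s := le_Mf hX ⟨hw.1.1, hws⟩
        rw [hw.2] at this
        linarith
      refine ⟨hMu, ?_⟩
      ext x
      constructor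
      · rintro ⟨hx1, hx2⟩
        have hXx : 0 ≤ -X x := by rw [hx2, hMu]; linarith
        have hxs : x ≤ s := W u ⟨h, hu.2⟩ x ⟨hx1, hx2⟩ hXx
        exact ⟨⟨hx1.1, hxs⟩, by rw [← hMu]; exact hx2⟩
      · rintro ⟨hx1, hx2⟩
        exact ⟨⟨hx1.1, hx1.2.trans hu.1⟩, by rw [hMu]; exact hx2⟩


include hJ in
lemma eta_const {s t' : ℝ} (hs : 0 ≤ s) (hst : s < t')
    (hpos : ∀ u ∈ Ioc s t', 0 < SM1 X u) : etaf X ψ t' = etaf X ψ s := by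
  have hZt' : SM1 X t' ≠ 0 := (hpos t' ⟨hst, le_rfl⟩).ne'
  have hηt' : etaf X ψ t' = Df X ψ t' := by
    rw [etaf, phif, if_neg hZt', gf]; ring
  rcases const_on_pos hX hs hst hpos with hneg | hconst
  · have hMs : Mf X s < 0 := hneg s ⟨le_rfl, hst.le⟩
    have hZs : SM1 X s ≠ 0 := by
      have h1 : -X s ≤ Mf X s := le_Mf hX ⟨hs, le_rfl⟩
      rw [SM1_eq', max_eq_right hMs.le]
      intro h
      linarith [h]
    rw [hηt', Df_negM (hneg t' ⟨hst.le, le_rfl⟩), etaf, phif, if_neg hZs, gf,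
      Df_negM hMs]
    ring
  · obtain ⟨hMt', hSt'⟩ := hconst t' ⟨hst.le, le_rfl⟩
    have hDeq : Df X ψ t' = Df X ψ s := Df_congr hMt' hSt'
    by_cases hbs : SM1 X s = 0
    · obtain ⟨hM0, hsS⟩ := boundary_facts hX hs hbs
      have hMspos : 0 < Mf X s := by
        rcases lt_or_eq_of_le hM0 with h | h
        · exact h
        · exfalso
          have := jitter_M_zero hX hJ hs hbs h.symm t' hst
          rw [hMt', ← h] at this
          exact lt_irrefl 0 this
      have hIs : If X ψ s = ψ s := by
        apply le_antisymm (If_le hX hψ hsS)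
        apply le_If hX hψ hs
        intro x hx
        rw [jitter_noR1 hX hJ hs hbs hst hMt' x hx]
      rw [hηt', hDeq, Df_pos hMspos, hIs, etaf, phif, if_pos hbs]
      ring
    · rw [hηt', hDeq, etaf, phif, if_neg hbs, gf]
      ring

include hJ in
lemma phi_right_cont {t : ℝ} (ht : 0 ≤ t) :
    Tendsto (phif X ψ) (𝓝[>] t) (𝓝 (phif X ψ t)) := by
  by_cases hb : SM1 X t = 0
  · rw [phif, if_pos hb]
    have hg := boundary_right_zero hX hψ hJ ht hb
    refine squeeze_zero_norm (f := phif X ψ) (a := fun u => |gf X ψ u|) (fun u => ?_) ?_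
    · rw [Real.norm_eq_abs, phif]
      split_ifs with h
      · simp [abs_nonneg]
      · exact le_rfl
    · have h2 := hg.abs
      rwa [abs_zero] at h2
  · obtain ⟨δ, hδ, hloc⟩ := loc_g hX ht hb
    have hφt : phif X ψ t = ψ t + Df X ψ t := by rw [phif, if_neg hb, gf]
    rw [hφt]
    apply Tendsto.congr' _ ((psi_tendsto_right hX hψ t).add tendsto_const_nhds)
    filter_upwards [Ioo_mem_nhdsGT_of_mem ⟨le_rfl, (show t < t + δ by linarith)⟩] with u hu
    have hu0 : 0 ≤ u := ht.trans hu.1.le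
    have hud : |u - t| < δ := by
      rw [abs_sub_lt_iff]
      exact ⟨by linarith [hu.2], by linarith [hu.1]⟩
    obtain ⟨hgu, hZu⟩ := hloc u hu0 hud
    rw [phif, if_neg hZu.ne', hgu]

include hJ in
lemma phi_left_lim {t : ℝ} (ht : 0 < t) :
    ∃ L, Tendsto (phif X ψ) (𝓝[<] t) (𝓝 L) := by
  by_cases hfree : ∃ a, a < t ∧ ∀ u ∈ Ioo a t, SM1 X u ≠ 0
  · obtain ⟨a, hat, hfr⟩ := hfree
    obtain ⟨L, hL, _⟩ := left_lim hX hψ ht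
    refine ⟨L, hL.congr' ?_⟩
    filter_upwards [Ioo_mem_nhdsLT_of_mem ⟨hat, le_rfl⟩] with u hu
    exact (if_neg (hfr u hu) : phif X ψ u = gf X ψ u).symm
  · push_neg at hfree
    have hbexists : ∀ a, a < t → ∃ b, b ∈ Ioo (max a 0) t ∧ SM1 X b = 0 := by
      intro a hat
      obtain ⟨u, hu, hZu⟩ := hfree (max a 0) (max_lt hat ht)
      exact ⟨u, hu, hZu⟩
    have hloc : ∀ δ, 0 < δ → δ < t → ∃ w, t - δ < w ∧ w < t ∧ 0 ≤ w ∧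
        ∀ u, w ≤ u → u < t → (0 < Mf X u ∧ ∀ x ∈ Sf X u, t - δ < x) := by
      intro δ hδ hδt
      obtain ⟨b, hbm, hbz⟩ := hbexists (t - δ) (by linarith)
      have hb0 : 0 ≤ b := (le_max_right _ 0).trans hbm.1.le
      have hbgt : t - δ < b := (le_max_left (t-δ) 0).trans_lt hbm.1
      have hmaxb : max (t - δ) 0 ≤ b := hbm.1.le
      obtain ⟨b', hbm', hbz'⟩ := hbexists b hbm.2
      have hbb' : b < b' := (le_max_left b 0).trans_lt hbm'.1
      have hb'0 : 0 ≤ b' := hb0.trans hbb'.le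
      have hb't : b' < t := hbm'.2
      have hMb0 : 0 ≤ Mf X b := (boundary_facts hX hb0 hbz).1
      have hxclaim : ∀ u, 0 ≤ u → Mf X (max (t - δ) 0) < Mf X u →
          ∀ x ∈ Sf X u, t - δ < x := by
        intro u hu0 hMu x hxS
        by_contra hcon
        push_neg at hcon
        have hxmax : x ≤ max (t - δ) 0 := le_max_of_le_left hcon
        have h1 : -X x ≤ Mf X (max (t - δ) 0) := le_Mf hX ⟨hxS.1.1, hxmax⟩
        rw [hxS.2] at h1
        linarith
      by_cases hRR : ∃ τ, b < τ ∧ Mf X τ = Mf X b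
      · obtain ⟨τ, h1, h2⟩ := hRR
        have hMbpos : 0 < Mf X b := by
          rcases lt_or_eq_of_le hMb0 with h | h
          · exact h
          · exfalso
            have := jitter_M_zero hX hJ hb0 hbz h.symm τ h1
            rw [h2, ← h] at this
            exact lt_irrefl 0 this
        have hnoR1 := jitter_noR1 hX hJ hb0 hbz h1 h2
        have hstr : Mf X (max (t - δ) 0) < Mf X b := by
          obtain ⟨x, hx⟩ := exists_Sf hX (le_max_right (t - δ) 0)
          have hxb : x < b := lt_of_le_of_lt hx.1.2 hbm.1
          have h3 : -X x ≤ Mf X b := le_Mf hX ⟨hx.1.1, hxb.le⟩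
          rcases lt_or_eq_of_le h3 with h4 | h4
          · rw [← hx.2]; exact h4
          · exact absurd (hnoR1 x ⟨⟨hx.1.1, hxb.le⟩, h4⟩) (ne_of_lt hxb)
        refine ⟨b, hbgt, hbm.2, hb0, fun u hbu hut => ?_⟩
        have hu0 : 0 ≤ u := hb0.trans hbu
        have hMbu : Mf X b ≤ Mf X u := Mf_mono hX hb0 hbu
        exact ⟨lt_of_lt_of_le hMbpos hMbu,
          hxclaim u hu0 (lt_of_lt_of_le hstr hMbu)⟩
      · push_neg at hRR
        have hstrict : Mf X b < Mf X b' :=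
          lt_of_le_of_ne (Mf_mono hX hb0 hbb'.le) (fun h => (hRR b' hbb') h.symm)
        refine ⟨b', hbgt.trans hbb', hb't, hb'0, fun u hb'u hut => ?_⟩
        have hu0 : 0 ≤ u := hb'0.trans hb'u
        have hMb'u : Mf X b' ≤ Mf X u := Mf_mono hX hb'0 hb'u
        have hmax : Mf X (max (t - δ) 0) ≤ Mf X b := Mf_mono hX (le_max_right _ 0) hmaxb
        exact ⟨by linarith, hxclaim u hu0 (by linarith)⟩
    refine ⟨0, ?_⟩
    rw [Metric.tendsto_nhdsWithin_nhds]
    intro ε hε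
    obtain ⟨δψ, hδψ, hosc⟩ := cont_ball hψ t (show (0:ℝ) < ε/3 by linarith)
    set δ0 : ℝ := min δψ (t/2) with hδ0def
    have hδ0pos : 0 < δ0 := lt_min hδψ (by linarith)
    have hδ0t : δ0 < t := lt_of_le_of_lt (min_le_right _ _) (by linarith)
    have hδ0ψ : δ0 ≤ δψ := min_le_left _ _
    obtain ⟨w, hw1, hw2, hw0, hwkey⟩ := hloc δ0 hδ0pos hδ0t
    refine ⟨t - w, by linarith, fun u hu hud => ?_⟩
    rw [Real.dist_eq] at hud
    have hut : u < t := hu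
    have hwu : w ≤ u := by
      rw [abs_sub_lt_iff] at hud
      linarith [hud.2]
    have hu0 : 0 ≤ u := hw0.trans hwu
    obtain ⟨hMu, hSx⟩ := hwkey u hwu hut
    have hgu : |gf X ψ u| < ε := by
      obtain ⟨m, hm, hψm⟩ := exists_If hX hψ hu0
      have hm1 : t - δ0 < m := hSx m hm
      have hm2 : m ≤ u := hm.1.2
      have hmd : |m - t| < δψ := by
        rw [abs_sub_lt_iff]
        constructor <;> linarith
      have hud2 : |u - t| < δψ := by
        rw [abs_sub_lt_iff] at hud ⊢
        constructor <;> [linarith [hud.1]; linarith [hud.2]]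
      have h1 := abs_lt.1 (hosc m hmd)
      have h2 := abs_lt.1 (hosc u hud2)
      rw [gf, Df_pos hMu, ← hψm, abs_lt]
      constructor <;> [linarith [h1.2, h2.1]; linarith [h1.1, h2.2]]
    rw [Real.dist_eq, sub_zero, phif]
    split_ifs with h
    · rwa [abs_zero]
    · exact hgu

end Jitter


section Package
include hX hψ

lemma cont_nonboundary {t : ℝ} (ht : 0 < t) (hZ : SM1 X t ≠ 0) :
    ContinuousAt (gf X ψ) t := by
  obtain ⟨δ, hδ, hloc⟩ := loc_g hX ht.le hZ
  have hev : (fun u => ψ u + Df X ψ t) =ᶠ[𝓝 t] gf X ψ := by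
    rw [Filter.eventuallyEq_iff_exists_mem]
    refine ⟨Metric.ball t (min δ t), Metric.ball_mem_nhds t (lt_min hδ ht), fun u hu => ?_⟩
    rw [Metric.mem_ball, Real.dist_eq] at hu
    have hu0 : 0 ≤ u := by
      have := (abs_lt.1 hu).1
      have := min_le_right δ t
      linarith
    exact ((hloc u hu0 (lt_of_lt_of_le hu (min_le_left _ _))).1).symm
  exact ContinuousAt.congr ((hψ.continuousAt).add continuousAt_const) hev

lemma Dlr1_gf : Dlr1 (gf X ψ) := by
  refine ⟨fun t ht => ?_, fun t ht => ?_, fun t ht => ?_⟩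
  · obtain ⟨L, hL, _⟩ := left_lim hX hψ ht; exact ⟨L, hL⟩
  · obtain ⟨L, hL, _⟩ := right_lim hX hψ ht; exact ⟨L, hL⟩
  · by_cases hZ : SM1 X t = 0
    · obtain ⟨hM0, htS⟩ := boundary_facts hX ht.le hZ
      obtain ⟨Lm, hLm, _, hLmb⟩ := left_lim hX hψ ht
      obtain ⟨Lp, hLp, _, hLpb⟩ := right_lim hX hψ ht.le
      obtain ⟨hmax, hIlt, hM0c⟩ := hLmb hZ
      by_cases hRR : ∃ τ, t < τ ∧ Mf X τ = Mf X t
      · exact Or.inr (((hLpb hZ).1 hRR) ▸ hLp)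
      · push_neg at hRR
        have hstrict : ∀ u, t < u → Mf X t < Mf X u := fun u hu =>
          lt_of_le_of_ne (Mf_mono hX ht.le hu.le) (fun h => (hRR u hu) h.symm)
        have hLp0 : Lp = 0 := (hLpb hZ).2 hstrict
        have hIle : If X ψ t ≤ ψ t := If_le hX hψ htS
        rcases lt_or_eq_of_le hIle with hlt | heq
        · left; rw [← hIlt hlt]; exact hLm
        · rcases lt_or_eq_of_le hM0 with hMpos | hMzero
          · right
            have hgt : gf X ψ t = 0 := by rw [gf, Df_pos hMpos, heq]; ring
            rw [hgt, ← hLp0]; exact hLp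
          · rcases le_or_gt (ψ t) 0 with hψt | hψt
            · right
              have hgt : gf X ψ t = 0 := by
                rw [gf, Df_zero hMzero.symm, heq, max_eq_left (by linarith)]; ring
              rw [hgt, ← hLp0]; exact hLp
            · left
              have hgt : gf X ψ t = ψ t := by
                rw [gf, Df_zero hMzero.symm, heq, max_eq_right (by linarith), add_zero]
              have hLmψ : Lm = ψ t := hM0c hMzero.symm (by rw [heq]; exact hψt.le)
              rw [hgt, ← hLmψ]; exact hLm
    · right
      obtain ⟨Lp, hLp, hne, _⟩ := right_lim hX hψ ht.le
      rw [← hne hZ]; exact hLp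

omit hX in
lemma gf_zero_pos (hX' : Continuous X) (h : 0 < X 0) : gf X ψ 0 = ψ 0 := by
  rw [gf, Df_negM (by rw [Mf_zero hX']; linarith), add_zero]

omit hX in
lemma gf_zero_eq (hX' : Continuous X) (h : X 0 = 0) : gf X ψ 0 = max (ψ 0) 0 := by
  have hM : Mf X 0 = 0 := by rw [Mf_zero hX', h, neg_zero]
  have hS : Sf X 0 = {0} := by
    ext x
    simp only [Sf, mem_Icc, mem_singleton_iff, mem_setOf_eq]
    constructor
    · rintro ⟨⟨h1, h2⟩, _⟩; exact le_antisymm h2 h1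
    · rintro rfl; exact ⟨⟨le_rfl, le_rfl⟩, by rw [hM, h, neg_zero]⟩
  have hI : If X ψ 0 = ψ 0 := by rw [If, hS, image_singleton, csInf_singleton]
  rw [gf, Df_zero hM, hI]
  simp only [max_def]
  split_ifs <;> linarith

lemma discont_clause {t : ℝ} (ht : 0 < t) (hd : ¬ ContinuousAt (gf X ψ) t) :
    SM1 X t = 0 ∧ ∀ Lm : ℝ, Tendsto (gf X ψ) (𝓝[<] t) (𝓝 Lm) →
      (Tendsto (gf X ψ) (𝓝[<] t) (𝓝 (gf X ψ t)) ↔ 0 ≤ Lm) := by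
  have hZ : SM1 X t = 0 := by
    by_contra h
    exact hd (cont_nonboundary hX hψ ht h)
  refine ⟨hZ, fun Lm hLm => ?_⟩
  obtain ⟨L, hL, _, hLb⟩ := left_lim hX hψ ht
  have hmax := (hLb hZ).1
  have hLmL : Lm = L := tendsto_nhds_unique hLm hL
  constructor
  · intro hcont
    have h1 : gf X ψ t = Lm := tendsto_nhds_unique hcont hLm
    have h3 : gf X ψ t = L := hLmL ▸ h1
    have h2 : L = max L 0 := h3.symm.trans hmax
    rw [hLmL]
    exact (le_max_right L 0).trans_eq h2.symm
  · intro hLm0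
    have h2 : gf X ψ t = Lm := by rw [hmax, hLmL, max_eq_left (hLmL ▸ hLm0)]
    rw [h2]
    exact hLm

lemma eta_zero (h0 : 0 < SM1 X 0) (hX0 : 0 ≤ X 0) : etaf X ψ 0 = 0 := by
  have hM0 : Mf X 0 < 0 := by
    rw [Mf_zero hX]
    rcases lt_or_eq_of_le hX0 with h | h
    · linarith
    · exfalso
      rw [SM1_eq', Mf_zero hX, ← h, neg_zero, max_self, add_zero] at h0
      exact lt_irrefl 0 h0
  rw [etaf, phif, if_neg h0.ne', gf, Df_negM hM0]
  ring

variable (hJ : ∀ t : ℝ, 0 ≤ t → SM1 X t = 0 →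
    ∀ s u : ℝ, s < t → t < u →
      ∃ a ∈ Ioo (max s 0) u, ∃ b ∈ Ioo (max s 0) u,
        max (Mf X a) 0 ≠ max (Mf X b) 0)

include hJ in
lemma solvesDP (hX0 : 0 ≤ X 0) : SolvesDP1 (SM1 X) ψ (phif X ψ) (etaf X ψ) := by
  refine ⟨⟨fun t ht => phi_right_cont hX hψ hJ ht, fun t ht => phi_left_lim hX hψ hJ ht⟩,
    ⟨fun t ht => ?_, fun t ht => ?_⟩,
    fun t ht => by simp only [etaf]; ring,
    fun t ht hz => if_pos hz,
    fun h0 => eta_zero hX hψ h0 hX0,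
    fun s t hs hst hpos => eta_const hX hψ hJ hs hst hpos⟩
  · exact (phi_right_cont hX hψ hJ ht).sub (psi_tendsto_right hX hψ t)
  · obtain ⟨L, hL⟩ := phi_left_lim hX hψ hJ ht
    exact ⟨L - ψ t, hL.sub (psi_tendsto_left hX hψ t)⟩

include hJ in
lemma uniqueDP {φ' η' : ℝ → ℝ} (hsol : SolvesDP1 (SM1 X) ψ φ' η') :
    EqOn (phif X ψ) φ' (Ici 0) ∧ EqOn (etaf X ψ) η' (Ici 0) := by
  obtain ⟨hDφ, hDη, hadd, hzero, h0, hconst⟩ := hsol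
  have hφ : ∀ t, 0 ≤ t → phif X ψ t = φ' t := by
    intro t ht
    by_cases hb : SM1 X t = 0
    · rw [phif, if_pos hb, hzero t ht hb]
    · have hZt : 0 < SM1 X t := lt_of_le_of_ne (SM1_nonneg hX ht) (Ne.symm hb)
      set K : Set ℝ := {u | u ∈ Icc 0 t ∧ SM1 X u = 0} with hK
      have hKsub : K ⊆ Icc 0 t := fun u hu => hu.1
      rcases eq_empty_or_nonempty K with hKe | hKne
      · have hZ00 : SM1 X 0 ≠ 0 := fun h => by
          have hm : (0:ℝ) ∈ K := ⟨⟨le_rfl, ht⟩, h⟩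
          rw [hKe] at hm
          exact absurd hm (notMem_empty 0)
        have hZ0 : 0 < SM1 X 0 := lt_of_le_of_ne (SM1_nonneg hX le_rfl) (Ne.symm hZ00)
        have hmy0 : etaf X ψ 0 = 0 := by
          rw [etaf, phif, if_neg hZ00, gf, Df_negM ?_]
          · ring
          · rw [Mf_zero hX]
            by_contra hc
            push_neg at hc
            have h1 : -X 0 ≤ Mf X 0 := le_Mf hX ⟨le_rfl, le_rfl⟩
            rw [Mf_zero hX] at h1
            have h2 : X 0 ≤ 0 := by linarith
            rw [SM1_eq', Mf_zero hX, max_eq_left (by linarith)] at hZ0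
            have : (0:ℝ) < 0 := by linarith
            exact lt_irrefl 0 this
        rcases eq_or_lt_of_le ht with h | h
        · rw [← h]
          have h1 : φ' 0 = ψ 0 + η' 0 := hadd 0 le_rfl
          have h2 : phif X ψ 0 = ψ 0 + etaf X ψ 0 := by simp only [etaf]; ring
          rw [h2, hmy0, h1, h0 hZ0]
        · have hpos : ∀ u ∈ Ioc 0 t, 0 < SM1 X u := by
            intro u hu
            refine lt_of_le_of_ne (SM1_nonneg hX hu.1.le) (Ne.symm fun hz => ?_)
            have hm : u ∈ K := ⟨⟨hu.1.le, hu.2⟩, hz⟩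
            rw [hKe] at hm
            exact absurd hm (notMem_empty u)
          have h1 : η' t = η' 0 := hconst 0 t le_rfl h hpos
          have h2 : etaf X ψ t = etaf X ψ 0 := eta_const hX hψ hJ le_rfl h hpos
          have h3 : phif X ψ t = ψ t + etaf X ψ t := by simp only [etaf]; ring
          rw [h3, h2, hmy0, hadd t ht, h1, h0 hZ0]
      · set s' := sSup K with hs'def
        have hbdd : BddAbove K := BddAbove.mono hKsub bddAbove_Icc
        have hs'le : s' ≤ t := csSup_le hKne (fun k hk => hk.1.2)
        have hs'0 : 0 ≤ s' := by
          obtain ⟨k, hk⟩ := hKne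
          exact hk.1.1.trans (le_csSup hbdd hk)
        have hs'b : SM1 X s' = 0 := by
          by_contra hcon
          obtain ⟨δ, hδ, hloc⟩ := loc_g (ψ := ψ) hX hs'0 hcon
          obtain ⟨k, hk, hk2⟩ := exists_lt_of_lt_csSup hKne (show s' - δ < s' by linarith)
          have hk3 : k ≤ s' := le_csSup hbdd hk
          have h4 := (hloc k hk.1.1 (by rw [abs_sub_lt_iff]; constructor <;> linarith)).2
          rw [hk.2] at h4
          exact lt_irrefl 0 h4
        have hs't : s' < t := lt_of_le_of_ne hs'le
          (fun h => by rw [h] at hs'b; exact hb hs'b)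
        have hpos : ∀ u ∈ Ioc s' t, 0 < SM1 X u := by
          intro u hu
          have hu0 : 0 ≤ u := hs'0.trans hu.1.le
          refine lt_of_le_of_ne (SM1_nonneg hX hu0) (Ne.symm fun hz => ?_)
          have hm : u ∈ K := ⟨⟨hu0, hu.2⟩, hz⟩
          exact absurd (le_csSup hbdd hm) (not_le.2 hu.1)
        have h1 : η' t = η' s' := hconst s' t hs'0 hs't hpos
        have h2 : η' s' = -ψ s' := by
          have ha := hadd s' hs'0
          have hz := hzero s' hs'0 hs'b
          rw [hz] at ha
          linarith
        have h4 : etaf X ψ t = -ψ s' := by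
          rw [eta_const hX hψ hJ hs'0 hs't hpos, etaf, phif, if_pos hs'b]
          ring
        have h6 : phif X ψ t = ψ t + etaf X ψ t := by simp only [etaf]; ring
        rw [h6, h4, hadd t ht, h1, h2]
  refine ⟨fun t ht => hφ t ht, fun t ht => ?_⟩
  have h1 := hadd t ht
  have h2 : etaf X ψ t = phif X ψ t - ψ t := rfl
  rw [h2, hφ t ht, h1]
  ring

include hJ in
lemma right_tendsto_phi {t : ℝ} (ht : 0 ≤ t) :
    Tendsto (gf X ψ) (𝓝[>] t) (𝓝 (phif X ψ t)) := by
  by_cases hb : SM1 X t = 0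
  · rw [phif, if_pos hb]
    exact boundary_right_zero hX hψ hJ ht hb
  · rw [phif, if_neg hb]
    obtain ⟨L, hL, hne, _⟩ := right_lim hX hψ ht
    rw [← hne hb]
    exact hL

end Package


lemma SM1_congr {f f' : ℝ → ℝ} {t : ℝ} (ht : 0 ≤ t) (h : ∀ s ∈ Icc 0 t, f s = f' s) :
    SM1 f t = SM1 f' t := by
  have himg : (fun s => -f s) '' Icc 0 t = (fun s => -f' s) '' Icc 0 t :=
    image_congr (fun s hs => by rw [show f s = f' s from h s hs])
  rw [SM1, SM1, h t ⟨ht, le_rfl⟩, himg]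

end S19

/-- **Proposition (directional derivatives of the one-dimensional Skorokhod map).**
For continuous `X` with `X 0 ≥ 0`, `Z = Γ₁(X)` and `Y(t) = max(sup_{[0,t]}(−X), 0)`:
(1) the directional derivative `g = ∇_ψ Γ₁(X)` exists for every continuous `ψ` and lies in
`D_{ℓ,r}`; (2) `g 0 = ψ 0` if `X 0 > 0`, `g 0 = max (ψ 0) 0` if `X 0 = 0`, and at any
discontinuity point `t > 0` of `g` one has `Z t = 0` and `g` is left continuous at `t` iff
`g(t−) ≥ 0`; (3) if `(Z,Y)` satisfies condition (1) of the boundary jitter property, the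
one-dimensional DP associated with `Z` for `ψ` has a unique solution `(φ,η)`, and
`φ t = g(t+)` for all `t ≥ 0`. -/
theorem statement19
    (X : ℝ → ℝ) (hX : ContinuousOn X (Ici 0)) (hX0 : 0 ≤ X 0)
    (Z Y : ℝ → ℝ)
    (hZ : ∀ t : ℝ, Z t = SM1 X t)
    (hY : ∀ t : ℝ, Y t = max (sSup ((fun s => -X s) '' Icc 0 t)) 0) :
    ∀ ψ : ℝ → ℝ, ContinuousOn ψ (Ici 0) →
      ∃ g : ℝ → ℝ,
        -- (1) existence of the directional derivative ...
        (∀ t : ℝ, 0 ≤ t →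
          Tendsto (fun ε : ℝ => (SM1 (fun s => X s + ε * ψ s) t - SM1 X t) / ε)
            (𝓝[>] (0:ℝ)) (𝓝 (g t))) ∧
        -- ... lying in `D_{ℓ,r}`
        Dlr1 g ∧
        -- (2) value at `0` ...
        ((0 < X 0 → g 0 = ψ 0) ∧ (X 0 = 0 → g 0 = max (ψ 0) 0)) ∧
        -- ... and structure of discontinuities
        (∀ t : ℝ, 0 < t → ¬ ContinuousAt g t →
          Z t = 0 ∧
          ∀ Lm : ℝ, Tendsto g (𝓝[<] t) (𝓝 Lm) →
            (Tendsto g (𝓝[<] t) (𝓝 (g t)) ↔ 0 ≤ Lm)) ∧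
        -- (3) under condition (1) of the boundary jitter property, the DP associated with `Z`
        -- for `ψ` has a unique solution `(φ,η)`, and `φ t = g (t+)`
        ((∀ t : ℝ, 0 ≤ t → Z t = 0 →
            ∀ s u : ℝ, s < t → t < u →
              ∃ a ∈ Ioo (max s 0) u, ∃ b ∈ Ioo (max s 0) u, Y a ≠ Y b) →
          ∃ φ η : ℝ → ℝ,
            SolvesDP1 Z ψ φ η ∧
            (∀ φ' η' : ℝ → ℝ, SolvesDP1 Z ψ φ' η' →
              EqOn φ φ' (Ici 0) ∧ EqOn η η' (Ici 0)) ∧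
            (∀ t : ℝ, 0 ≤ t → Tendsto g (𝓝[>] t) (𝓝 (φ t)))) := by
  intro ψ0 hψ0
  set Xc : ℝ → ℝ := fun s => X (max s 0) with hXcdef
  set ψc : ℝ → ℝ := fun s => ψ0 (max s 0) with hψcdef
  have hXc : Continuous Xc :=
    hX.comp_continuous (continuous_id.max continuous_const) (fun x => le_max_right x 0)
  have hψc : Continuous ψc :=
    hψ0.comp_continuous (continuous_id.max continuous_const) (fun x => le_max_right x 0)
  have hXeq : ∀ s, 0 ≤ s → Xc s = X s := fun s hs => by
    simp only [hXcdef]; rw [max_eq_left hs]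
  have hψeq : ∀ s, 0 ≤ s → ψc s = ψ0 s := fun s hs => by
    simp only [hψcdef]; rw [max_eq_left hs]
  have hXc0 : Xc 0 = X 0 := hXeq 0 le_rfl
  have hZeq : ∀ t, 0 ≤ t → SM1 Xc t = Z t := fun t ht => by
    rw [hZ t]
    exact S19.SM1_congr ht (fun s hs => hXeq s hs.1)
  have hMfeq : ∀ a : ℝ, 0 ≤ a → max (S19.Mf Xc a) 0 = Y a := by
    intro a ha
    have himg : (fun s => -Xc s) '' Icc 0 a = (fun s => -X s) '' Icc 0 a :=
      image_congr (fun s hs => by rw [show Xc s = X s from hXeq s hs.1])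
    rw [hY a, S19.Mf, himg]
  refine ⟨S19.gf Xc ψc, ?_, S19.Dlr1_gf hXc hψc, ⟨?_, ?_⟩, ?_, ?_⟩
  · intro t ht
    refine Tendsto.congr (fun ε => ?_) (S19.SM1_deriv hXc hψc ht)
    congr 1
    congr 1
    · exact S19.SM1_congr ht fun s hs => by rw [hXeq s hs.1, hψeq s hs.1]
    · exact S19.SM1_congr ht fun s hs => hXeq s hs.1
  · intro h
    rw [S19.gf_zero_pos hψc hXc (by rw [hXc0]; exact h)]
    exact hψeq 0 le_rfl
  · intro h
    rw [S19.gf_zero_eq hψc hXc (by rw [hXc0]; exact h), hψeq 0 le_rfl]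
  · intro t ht hd
    obtain ⟨h1, h2⟩ := S19.discont_clause hXc hψc ht hd
    exact ⟨by rw [← hZeq t ht.le]; exact h1, h2⟩
  · intro hjit
    have hJ : ∀ t : ℝ, 0 ≤ t → SM1 Xc t = 0 →
        ∀ s u : ℝ, s < t → t < u →
          ∃ a ∈ Ioo (max s 0) u, ∃ b ∈ Ioo (max s 0) u,
            max (S19.Mf Xc a) 0 ≠ max (S19.Mf Xc b) 0 := by
      intro t ht hb s u hs hu
      obtain ⟨a, ha, b, hbm, hne⟩ := hjit t ht (by rw [← hZeq t ht]; exact hb) s u hs hu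
      have ha0 : 0 ≤ a := (le_max_right s 0).trans ha.1.le
      have hb0 : 0 ≤ b := (le_max_right s 0).trans hbm.1.le
      exact ⟨a, ha, b, hbm, by rw [hMfeq a ha0, hMfeq b hb0]; exact hne⟩
    refine ⟨S19.phif Xc ψc, S19.etaf Xc ψc, ?_, ?_, fun t ht =>
      S19.right_tendsto_phi hXc hψc hJ ht⟩
    · obtain ⟨d1, d2, h3, h4, h5, h6⟩ := S19.solvesDP hXc hψc hJ (by rw [hXc0]; exact hX0)
      refine ⟨d1, d2, fun t ht => by rw [h3 t ht, hψeq t ht],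
        fun t ht hz => h4 t ht (by rw [hZeq t ht]; exact hz),
        fun h0 => h5 (by rw [hZeq 0 le_rfl]; exact h0),
        fun s t hs hst hpos => h6 s t hs hst (fun u hu => ?_)⟩
      rw [hZeq u (hs.trans hu.1.le)]
      exact hpos u hu
    · intro φ' η' hsol'
      obtain ⟨d1, d2, h3, h4, h5, h6⟩ := hsol'
      have hsol'' : SolvesDP1 (SM1 Xc) ψc φ' η' := by
        refine ⟨d1, d2, fun t ht => by rw [h3 t ht, hψeq t ht],
          fun t ht hz => h4 t ht (by rw [← hZeq t ht]; exact hz),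
          fun h0 => h5 (by rw [← hZeq 0 le_rfl]; exact h0),
          fun s t hs hst hpos => h6 s t hs hst (fun u hu => ?_)⟩
        rw [← hZeq u (hs.trans hu.1.le)]
        exact hpos u hu
      exact S19.uniqueDP hXc hψc hJ hsol''
end
end
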